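/- arXiv:1701.00908 — 5 statements merged into one kernel-verified Lean document; each statement's English description precedes it below -/
import Mathlib

section
/- If x, y ∈ H_{p,t,s} satisfy o(x) = p^t, o(y) = p^s, and ⟨x, y⟩ = H_{p,t,s}, then there exists an automorphism of H_{p,t,s} mapping a to x and b to y. -/
open scoped commutatorElement

/-- Relations for the inner-abelian non-metacyclic p-group
`H_{p,t,s} = ⟨a, b, c | a^(p^t) = b^(p^s) = c^p = 1, [a,b] = c, [c,a] = [c,b] = 1⟩`. -/
def HRels (p t s : ℕ) : Set (FreeGroup (Fin 3)) :=
  {FreeGroup.of (0 : Fin 3) ^ p ^ t, FreeGroup.of (1 : Fin 3) ^ p ^ s, FreeGroup.of (2 : Fin 3) ^ p,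
   ⁅FreeGroup.of (0 : Fin 3), FreeGroup.of (1 : Fin 3)⁆ * (FreeGroup.of (2 : Fin 3))⁻¹,
   ⁅FreeGroup.of (2 : Fin 3), FreeGroup.of (0 : Fin 3)⁆, ⁅FreeGroup.of (2 : Fin 3), FreeGroup.of (1 : Fin 3)⁆}

/-- The group `H_{p,t,s}` as a presented group. -/
abbrev Hgrp (p t s : ℕ) := PresentedGroup (HRels p t s)

/-- The generator `a` of `H_{p,t,s}`. -/
def aa (p t s : ℕ) : Hgrp p t s := PresentedGroup.of (0 : Fin 3)

/-- The generator `b` of `H_{p,t,s}`. -/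
def bb (p t s : ℕ) : Hgrp p t s := PresentedGroup.of (1 : Fin 3)

/-- The generator `c = [a,b]` of `H_{p,t,s}`. -/
def cc (p t s : ℕ) : Hgrp p t s := PresentedGroup.of (2 : Fin 3)

section lems
variable (p t s : ℕ)

lemma Hrel_eq_one {r : FreeGroup (Fin 3)} (hr : r ∈ HRels p t s) :
    PresentedGroup.mk (HRels p t s) r = 1 :=
  (QuotientGroup.eq_one_iff _).2 (Subgroup.subset_normalClosure hr)

lemma relA : (aa p t s) ^ (p ^ t) = 1 := by
  have := Hrel_eq_one p t s (r := FreeGroup.of (0:Fin 3) ^ p ^ t) (by simp [HRels])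
  simpa [aa, PresentedGroup.of, map_pow] using this

lemma relB : (bb p t s) ^ (p ^ s) = 1 := by
  have := Hrel_eq_one p t s (r := FreeGroup.of (1:Fin 3) ^ p ^ s) (by simp [HRels])
  simpa [bb, PresentedGroup.of, map_pow] using this

lemma relC : (cc p t s) ^ p = 1 := by
  have := Hrel_eq_one p t s (r := FreeGroup.of (2:Fin 3) ^ p) (by simp [HRels])
  simpa [cc, PresentedGroup.of, map_pow] using this

lemma relComm : ⁅aa p t s, bb p t s⁆ = cc p t s := by
  have := Hrel_eq_one p t s
    (r := ⁅FreeGroup.of (0:Fin 3), FreeGroup.of (1:Fin 3)⁆ * (FreeGroup.of (2:Fin 3))⁻¹)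
    (by simp [HRels])
  have h2 : (PresentedGroup.mk (HRels p t s)) ⁅FreeGroup.of (0:Fin 3), FreeGroup.of (1:Fin 3)⁆
      * ((PresentedGroup.mk (HRels p t s)) (FreeGroup.of (2:Fin 3)))⁻¹ = 1 := by
    simpa using this
  have h3 := mul_inv_eq_one.mp h2
  simpa [aa, bb, cc, PresentedGroup.of, map_commutatorElement] using h3

lemma ccommA : Commute (cc p t s) (aa p t s) := by
  have := Hrel_eq_one p t s (r := ⁅FreeGroup.of (2:Fin 3), FreeGroup.of (0:Fin 3)⁆) (by simp [HRels])
  rw [map_commutatorElement] at this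
  exact commutatorElement_eq_one_iff_commute.mp this

lemma ccommB : Commute (cc p t s) (bb p t s) := by
  have := Hrel_eq_one p t s (r := ⁅FreeGroup.of (2:Fin 3), FreeGroup.of (1:Fin 3)⁆) (by simp [HRels])
  rw [map_commutatorElement] at this
  exact commutatorElement_eq_one_iff_commute.mp this

lemma of_cases (j : Fin 3) : PresentedGroup.of (rels := HRels p t s) j = aa p t s ∨
    PresentedGroup.of (rels := HRels p t s) j = bb p t s ∨
    PresentedGroup.of (rels := HRels p t s) j = cc p t s := by
  fin_cases j
  · exact Or.inl rfl
  · exact Or.inr (Or.inl rfl)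
  · exact Or.inr (Or.inr rfl)

lemma cc_central (g : Hgrp p t s) : Commute (cc p t s) g := by
  have : g ∈ Subgroup.centralizer {cc p t s} := by
    refine PresentedGroup.generated_by _ _ (fun j => ?_) g
    rcases of_cases p t s j with h | h | h <;> rw [h] <;>
      rw [Subgroup.mem_centralizer_iff] <;> intro h hh <;> simp_all
    · exact (ccommA p t s).eq
    · exact (ccommB p t s).eq
  have := Subgroup.mem_centralizer_iff.mp this (cc p t s) rfl
  exact this
end lems

section quot
variable (p t s : ℕ)

instance Ncc_normal : (Subgroup.zpowers (cc p t s)).Normal := by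
  constructor
  intro n hn g
  obtain ⟨k, hk⟩ := hn
  have hc : Commute n g := by
    rw [← hk]; exact ((cc_central p t s g).zpow_left k)
  rw [← hc.eq, mul_assoc, mul_inv_cancel, mul_one]
  exact ⟨k, hk⟩

local notation "N" => Subgroup.zpowers (cc p t s)
local notation "π" => QuotientGroup.mk' (Subgroup.zpowers (cc p t s))

lemma pi_cc : π (cc p t s) = 1 :=
  (QuotientGroup.eq_one_iff _).2 (Subgroup.mem_zpowers _)

lemma pi_pair (j k : Fin 3) :
    Commute (π (PresentedGroup.of j)) (π (PresentedGroup.of k)) := by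
  have hab : Commute (π (aa p t s)) (π (bb p t s)) := by
    rw [← commutatorElement_eq_one_iff_commute, ← map_commutatorElement, relComm, pi_cc]
  have hc : ∀ g : Hgrp p t s, Commute (π (cc p t s)) (π g) :=
    fun g => (cc_central p t s g).map _
  fin_cases j <;> fin_cases k
  · exact Commute.refl _
  · exact hab
  · exact ((hc _).symm).symm.symm
  · exact hab.symm
  · exact Commute.refl _
  · exact (hc _).symm
  · exact hc _
  · exact hc _
  · exact Commute.refl _

lemma Q_comm (g h : Hgrp p t s) : Commute (π g) (π h) := by
  have key : ∀ j : Fin 3, ∀ h : Hgrp p t s,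
      Commute (π (PresentedGroup.of j)) (π h) := by
    intro j h
    have : h ∈ Subgroup.comap (QuotientGroup.mk' N)
        (Subgroup.centralizer {π (PresentedGroup.of j)}) := by
      refine PresentedGroup.generated_by _ _ (fun k => ?_) h
      exact Subgroup.mem_comap.2 (Subgroup.mem_centralizer_iff.2
        (fun z hz => by rw [Set.mem_singleton_iff.mp hz]; exact (pi_pair p t s j k).eq))
    exact Subgroup.mem_centralizer_iff.mp (Subgroup.mem_comap.1 this) _ rfl
  have : g ∈ Subgroup.comap (QuotientGroup.mk' N) (Subgroup.centralizer {π h}) := by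
    refine PresentedGroup.generated_by _ _ (fun k => ?_) g
    exact Subgroup.mem_comap.2 (Subgroup.mem_centralizer_iff.2
      (fun z hz => by rw [Set.mem_singleton_iff.mp hz]; exact ((key k h).symm).eq))
  exact (Subgroup.mem_centralizer_iff.mp (Subgroup.mem_comap.1 this) _ rfl).symm

lemma comm_mem_N (g h : Hgrp p t s) : ⁅g, h⁆ ∈ N := by
  have : π ⁅g, h⁆ = 1 := by
    rw [map_commutatorElement, commutatorElement_eq_one_iff_commute]
    exact Q_comm p t s g h
  exact (QuotientGroup.eq_one_iff _).1 this

end quot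

lemma pow_reduce {G : Type*} [Group G] {g : G} {n : ℕ} (hn : 0 < n) (h : g ^ n = 1) (i : ℤ) :
    ∃ m : ℕ, m < n ∧ g ^ i = g ^ m := by
  have hn' : (0:ℤ) < n := by exact_mod_cast hn
  refine ⟨(i % n).toNat, ?_, ?_⟩
  · have h1 : i % n < n := Int.emod_lt_of_pos i hn'
    have h2 : 0 ≤ i % n := Int.emod_nonneg i (by omega)
    omega
  · have hz : g ^ (n : ℤ) = 1 := by rw [zpow_natCast, h]
    have h2 : 0 ≤ i % n := Int.emod_nonneg i (by omega)
    calc g ^ i = g ^ ((n:ℤ) * (i / n) + i % n) := by rw [Int.mul_ediv_add_emod]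
    _ = (g ^ (n:ℤ)) ^ (i / n) * g ^ (i % n) := by rw [zpow_add, zpow_mul]
    _ = g ^ (i % n) := by rw [hz, one_zpow, one_mul]
    _ = g ^ (i % n).toNat := by rw [← zpow_natCast, Int.toNat_of_nonneg h2]

section fin
variable (p t s : ℕ)

local notation "N" => Subgroup.zpowers (cc p t s)
local notation "π" => QuotientGroup.mk' (Subgroup.zpowers (cc p t s))

lemma Q_comm' (q r : Hgrp p t s ⧸ N) : q * r = r * q := by
  obtain ⟨g, rfl⟩ := QuotientGroup.mk'_surjective N q
  obtain ⟨h, rfl⟩ := QuotientGroup.mk'_surjective N r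
  exact (Q_comm p t s g h).eq

lemma Q_decomp (q : Hgrp p t s ⧸ N) :
    ∃ i j : ℤ, q = π (aa p t s) ^ i * π (bb p t s) ^ j := by
  obtain ⟨g, rfl⟩ := QuotientGroup.mk'_surjective N q
  have hmem : g ∈ Subgroup.comap (QuotientGroup.mk' N)
      (Subgroup.closure {π (aa p t s), π (bb p t s)}) := by
    refine PresentedGroup.generated_by _ _ (fun k => ?_) g
    refine Subgroup.mem_comap.2 ?_
    fin_cases k
    · exact Subgroup.subset_closure (by left; rfl)
    · exact Subgroup.subset_closure (by right; rfl)
    · show π (cc p t s) ∈ _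
      rw [pi_cc]
      exact one_mem _
  have := Subgroup.mem_comap.1 hmem
  refine Subgroup.closure_induction (fun z hz => ?_) ⟨0, 0, by simp⟩
    (fun z w _ _ hz hw => ?_) (fun z _ hz => ?_) this
  · rcases hz with h | h
    · exact ⟨1, 0, by simp [h]⟩
    · rw [Set.mem_singleton_iff] at h
      exact ⟨0, 1, by simp [h]⟩
  · obtain ⟨i1, j1, rfl⟩ := hz
    obtain ⟨i2, j2, rfl⟩ := hw
    refine ⟨i1 + i2, j1 + j2, ?_⟩
    rw [zpow_add, zpow_add]
    have hc : π (bb p t s) ^ j1 * π (aa p t s) ^ i2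
        = π (aa p t s) ^ i2 * π (bb p t s) ^ j1 := Q_comm' p t s _ _
    calc π (aa p t s) ^ i1 * π (bb p t s) ^ j1 * (π (aa p t s) ^ i2 * π (bb p t s) ^ j2)
        = π (aa p t s) ^ i1 * (π (bb p t s) ^ j1 * π (aa p t s) ^ i2) * π (bb p t s) ^ j2 := by
          group
      _ = π (aa p t s) ^ i1 * (π (aa p t s) ^ i2 * π (bb p t s) ^ j1) * π (bb p t s) ^ j2 := by
          rw [hc]
      _ = π (aa p t s) ^ i1 * π (aa p t s) ^ i2 * (π (bb p t s) ^ j1 * π (bb p t s) ^ j2) := by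
          group
  · obtain ⟨i, j, rfl⟩ := hz
    refine ⟨-i, -j, ?_⟩
    rw [mul_inv_rev, zpow_neg, zpow_neg, Q_comm']

lemma finiteQ (hp : 0 < p) : Finite (Hgrp p t s ⧸ N) := by
  have hA : π (aa p t s) ^ p ^ t = 1 := by rw [← map_pow, relA, map_one]
  have hB : π (bb p t s) ^ p ^ s = 1 := by rw [← map_pow, relB, map_one]
  have hpt : 0 < p ^ t := Nat.pow_pos hp
  have hps : 0 < p ^ s := Nat.pow_pos hp
  refine Finite.of_surjective
    (fun ij : Fin (p ^ t) × Fin (p ^ s) => π (aa p t s) ^ (ij.1 : ℕ) * π (bb p t s) ^ (ij.2 : ℕ))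
    (fun q => ?_)
  obtain ⟨i, j, rfl⟩ := Q_decomp p t s q
  obtain ⟨m1, hm1, he1⟩ := pow_reduce hpt hA i
  obtain ⟨m2, hm2, he2⟩ := pow_reduce hps hB j
  refine ⟨(⟨m1, hm1⟩, ⟨m2, hm2⟩), ?_⟩
  show π (aa p t s) ^ m1 * π (bb p t s) ^ m2 = π (aa p t s) ^ i * π (bb p t s) ^ j
  rw [← he1, ← he2]

lemma finiteH (hp : 0 < p) : Finite (Hgrp p t s) := by
  haveI := finiteQ p t s hp
  haveI : Finite (↥(Subgroup.zpowers (cc p t s))) := by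
    exact Set.Finite.to_subtype
      (finite_zpowers.2 (isOfFinOrder_iff_pow_eq_one.2 ⟨p, hp, relC p t s⟩))
  exact Finite.of_equiv _ (Subgroup.groupEquivQuotientProdSubgroup (s := N)).symm

end fin


theorem stmt5 (p t s : ℕ) (hp : p.Prime) (hodd : Odd p) (hs : 1 ≤ s) (hts : s ≤ t)
    (x y : Hgrp p t s)
    (hx : orderOf x = p ^ t) (hy : orderOf y = p ^ s)
    (hgen : Subgroup.closure {x, y} = (⊤ : Subgroup (Hgrp p t s))) :
    ∃ φ : Hgrp p t s ≃* Hgrp p t s, φ (aa p t s) = x ∧ φ (bb p t s) = y := by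
  haveI : Finite (Hgrp p t s) := finiteH p t s hp.pos
  obtain ⟨k, hk⟩ := Subgroup.mem_zpowers_iff.mp (comm_mem_N p t s x y)
  have hcomc : ∀ g, Commute ⁅x, y⁆ g := fun g => by
    rw [← hk]; exact (cc_central p t s g).zpow_left k
  have hcp : ⁅x, y⁆ ^ p = 1 := by
    rw [← hk, ← zpow_natCast, ← zpow_mul, mul_comm, zpow_mul, zpow_natCast, relC, one_zpow]
  set f : Fin 3 → Hgrp p t s := ![x, y, ⁅x, y⁆] with hf_def
  have hf0 : f 0 = x := rfl
  have hf1 : f 1 = y := rfl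
  have hf2 : f 2 = ⁅x, y⁆ := rfl
  have hf : ∀ r ∈ HRels p t s, FreeGroup.lift f r = 1 := by
    intro r hr
    simp only [HRels, Set.mem_insert_iff, Set.mem_singleton_iff] at hr
    rcases hr with rfl | rfl | rfl | rfl | rfl | rfl
    · rw [map_pow, FreeGroup.lift_apply_of, hf0, ← hx, pow_orderOf_eq_one]
    · rw [map_pow, FreeGroup.lift_apply_of, hf1, ← hy, pow_orderOf_eq_one]
    · rw [map_pow, FreeGroup.lift_apply_of, hf2, hcp]
    · rw [map_mul, map_inv, map_commutatorElement, FreeGroup.lift_apply_of, FreeGroup.lift_apply_of,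
        FreeGroup.lift_apply_of, hf0, hf1, hf2, mul_inv_cancel]
    · rw [map_commutatorElement, FreeGroup.lift_apply_of, FreeGroup.lift_apply_of, hf0, hf2]
      exact commutatorElement_eq_one_iff_commute.2 (hcomc x)
    · rw [map_commutatorElement, FreeGroup.lift_apply_of, FreeGroup.lift_apply_of, hf1, hf2]
      exact commutatorElement_eq_one_iff_commute.2 (hcomc y)
  let φ := PresentedGroup.toGroup hf
  have ha : φ (aa p t s) = x := PresentedGroup.toGroup.of hf
  have hb : φ (bb p t s) = y := PresentedGroup.toGroup.of hf
  have hsub : Subgroup.closure {x, y} ≤ φ.range := by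
    rw [Subgroup.closure_le]
    rintro z (rfl | hz)
    · exact ⟨aa p t s, ha⟩
    · rw [Set.mem_singleton_iff] at hz
      exact ⟨bb p t s, hz ▸ hb⟩
  have hsurj : Function.Surjective φ := fun g => hsub (hgen ▸ Subgroup.mem_top g)
  have hinj : Function.Injective φ := Finite.injective_iff_surjective.mpr hsurj
  exact ⟨MulEquiv.ofBijective φ ⟨hinj, hsurj⟩, ha, hb⟩
end

section
/- Every maximal subgroup of H_{p,t,s} is equal to ⟨a b^j, b^p, c⟩ for some j ∈ {0, 1, ..., p-1} or to ⟨a^p, b, c⟩; the former is isomorphic to Z_{p^t} × Z_{p^{s-1}} × Z_p and the latter to Z_{p^{t-1}} × Z_{p^s} × Z_p. -/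
set_option linter.unusedSectionVars false
set_option linter.unusedTactic false
set_option linter.unnecessarySeqFocus false
set_option linter.unusedVariables false
set_option linter.unreachableTactic false
set_option linter.unnecessarySimpa false
set_option maxHeartbeats 1000000

open scoped commutatorElement

/-- the multiplication-by-`p` map `ZMod (p^(k-1)) →+ ZMod (p^k)`. -/
def liftP (p k : ℕ) [NeZero p] : ZMod (p ^ (k - 1)) →+ ZMod (p ^ k) where
  toFun m := (p : ZMod (p ^ k)) * ((m.val : ℕ) : ZMod (p ^ k))
  map_zero' := by simp
  map_add' a b := by
    rcases Nat.eq_zero_or_pos k with hk0 | hk1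
    · have h1 : p ^ k = 1 := by rw [hk0, pow_zero]
      haveI : Subsingleton (ZMod (p ^ k)) := by rw [h1]; infer_instance
      exact Subsingleton.elim _ _
    · haveI : NeZero (p ^ (k - 1)) := ⟨pow_ne_zero _ (NeZero.ne p)⟩
      show (p : ZMod (p ^ k)) * (((a + b).val : ℕ) : ZMod (p ^ k))
          = (p : ZMod (p ^ k)) * ((a.val : ℕ) : ZMod (p ^ k))
            + (p : ZMod (p ^ k)) * ((b.val : ℕ) : ZMod (p ^ k))
      have hM : p * p ^ (k - 1) = p ^ k := by rw [← pow_succ']; congr 1; omega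
      have h0 : (p : ZMod (p ^ k)) * ((p : ZMod (p ^ k))) ^ (k - 1) = 0 := by
        have h : ((p * p ^ (k - 1) : ℕ) : ZMod (p ^ k)) = 0 := by
          rw [hM]; exact ZMod.natCast_self _
        push_cast at h
        exact h
      have hcast := congrArg (Nat.cast : ℕ → ZMod (p ^ k))
        (Nat.mod_add_div (a.val + b.val) (p ^ (k - 1)))
      push_cast at hcast
      rw [ZMod.val_add]
      push_cast
      linear_combination (p : ZMod (p ^ k)) * hcast -
        (((a.val + b.val) / p ^ (k - 1) : ℕ) : ZMod (p ^ k)) * h0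

lemma liftP_apply (p k : ℕ) [NeZero p] (m : ZMod (p ^ (k - 1))) :
    liftP p k m = (p : ZMod (p ^ k)) * ((m.val : ℕ) : ZMod (p ^ k)) := rfl

/-- Concrete model of `H_{p,t,s}` : Heisenberg-type group on
`ZMod (p^t) × ZMod (p^s) × ZMod p` with a symmetrized cocycle. -/
@[ext]
structure GH (p t s : ℕ) where
  x : ZMod (p ^ t)
  y : ZMod (p ^ s)
  z : ZMod p

namespace GH

variable {p t s : ℕ} [Fact (p ∣ p ^ t)] [Fact (p ∣ p ^ s)]

/-- reduction `ZMod (p^t) → ZMod p`. -/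
def ft : ZMod (p ^ t) →+* ZMod p := ZMod.castHom (Fact.out : p ∣ p ^ t) (ZMod p)

/-- reduction `ZMod (p^s) → ZMod p`. -/
def fs : ZMod (p ^ s) →+* ZMod p := ZMod.castHom (Fact.out : p ∣ p ^ s) (ZMod p)

/-- the constant `2⁻¹` in `ZMod p`. -/
def rr (p : ℕ) : ZMod p := (2 : ZMod p)⁻¹

instance : Mul (GH p t s) :=
  ⟨fun v w => ⟨v.x + w.x, v.y + w.y,
    v.z + w.z + rr p * (ft v.x * fs w.y - fs v.y * ft w.x)⟩⟩

instance : One (GH p t s) := ⟨⟨0, 0, 0⟩⟩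
instance : Inv (GH p t s) := ⟨fun v => ⟨-v.x, -v.y, -v.z⟩⟩

@[simp] lemma mul_x (v w : GH p t s) : (v * w).x = v.x + w.x := rfl
@[simp] lemma mul_y (v w : GH p t s) : (v * w).y = v.y + w.y := rfl
@[simp] lemma mul_z (v w : GH p t s) :
    (v * w).z = v.z + w.z + rr p * (ft v.x * fs w.y - fs v.y * ft w.x) := rfl
@[simp] lemma one_x : (1 : GH p t s).x = 0 := rfl
@[simp] lemma one_y : (1 : GH p t s).y = 0 := rfl
@[simp] lemma one_z : (1 : GH p t s).z = 0 := rfl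
@[simp] lemma inv_x (v : GH p t s) : (v⁻¹).x = -v.x := rfl
@[simp] lemma inv_y (v : GH p t s) : (v⁻¹).y = -v.y := rfl
@[simp] lemma inv_z (v : GH p t s) : (v⁻¹).z = -v.z := rfl

instance : Group (GH p t s) where
  mul_assoc a b c := by ext <;> simp [map_add] <;> ring
  one_mul a := by ext <;> simp
  mul_one a := by ext <;> simp
  inv_mul_cancel a := by ext <;> simp [map_neg] <;> ring

lemma pow_def (v : GH p t s) (n : ℕ) :
    v ^ n = ⟨(n : ZMod (p ^ t)) * v.x, (n : ZMod (p ^ s)) * v.y, (n : ZMod p) * v.z⟩ := by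
  induction n with
  | zero => ext <;> simp
  | succ n ih =>
      rw [pow_succ, ih]
      ext <;> simp [map_mul, map_natCast] <;> push_cast <;> ring

@[simp] lemma pow_x (v : GH p t s) (n : ℕ) : (v ^ n).x = (n : ZMod (p ^ t)) * v.x := by
  rw [pow_def]
@[simp] lemma pow_y (v : GH p t s) (n : ℕ) : (v ^ n).y = (n : ZMod (p ^ s)) * v.y := by
  rw [pow_def]
@[simp] lemma pow_z (v : GH p t s) (n : ℕ) : (v ^ n).z = (n : ZMod p) * v.z := by
  rw [pow_def]

/-- the generator `a` in the model. -/
def aG : GH p t s := ⟨1, 0, 0⟩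
/-- the generator `b` in the model. -/
def bG : GH p t s := ⟨0, 1, 0⟩
/-- the generator `c` in the model. -/
def cG : GH p t s := ⟨0, 0, 1⟩

/-- `GH` is in bijection with the product of its coordinates -/
def toProd : GH p t s ≃ (ZMod (p ^ t) × ZMod (p ^ s) × ZMod p) where
  toFun v := (v.x, v.y, v.z)
  invFun w := ⟨w.1, w.2.1, w.2.2⟩
  left_inv v := rfl
  right_inv w := rfl

variable [NeZero p]

instance : Finite (GH p t s) := Finite.of_equiv _ toProd.symm

lemma card_GH : Nat.card (GH p t s) = p ^ t * (p ^ s * p) := by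
  rw [Nat.card_congr toProd]
  simp [Nat.card_zmod]

lemma two_rr (hp : p.Prime) (hodd : Odd p) : (2 : ZMod p) * rr p = 1 := by
  haveI : Fact p.Prime := ⟨hp⟩
  apply mul_inv_cancel₀
  have hnd : ¬ (p ∣ 2) := by
    intro h
    have := (Nat.prime_dvd_prime_iff_eq hp Nat.prime_two).mp h
    subst this
    simp [Nat.odd_iff] at hodd
  have : ((2 : ℕ) : ZMod p) ≠ 0 := by
    rw [Ne, ZMod.natCast_eq_zero_iff]; exact hnd
  simpa using this

lemma commutator_ab (hp : p.Prime) (hodd : Odd p) : ⁅(aG : GH p t s), (bG : GH p t s)⁆ = cG := by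
  have h2 := two_rr (p := p) hp hodd
  show aG * bG * aG⁻¹ * bG⁻¹ = cG
  ext <;> simp [aG, bG, cG, map_neg, map_one] <;> try ring
  linear_combination h2

lemma commutator_ca : ⁅(cG : GH p t s), (aG : GH p t s)⁆ = 1 := by
  show cG * aG * cG⁻¹ * aG⁻¹ = 1
  ext <;> simp [aG, cG, map_neg, map_one]

lemma commutator_cb : ⁅(cG : GH p t s), (bG : GH p t s)⁆ = 1 := by
  show cG * bG * cG⁻¹ * bG⁻¹ = 1
  ext <;> simp [bG, cG, map_neg, map_one]

/-! ### the two families of index-`p` subgroups -/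

lemma ft_liftP (i : ZMod (p ^ (t - 1))) : ft (liftP p t i) = 0 := by
  rw [liftP_apply, map_mul, map_natCast, ZMod.natCast_self, zero_mul]

lemma fs_liftP (m : ZMod (p ^ (s - 1))) : fs (liftP p s m) = 0 := by
  rw [liftP_apply, map_mul, map_natCast, ZMod.natCast_self, zero_mul]

/-- the cast `ZMod (p^t) → ZMod (p^s)` (for `s ≤ t`). -/
def fts (hts : s ≤ t) : ZMod (p ^ t) →+* ZMod (p ^ s) :=
  ZMod.castHom (pow_dvd_pow p hts) (ZMod (p ^ s))

lemma fs_fts (hts : s ≤ t) (i : ZMod (p ^ t)) : fs (fts hts i) = ft i := by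
  have h := ZMod.castHom_comp (Fact.out : p ∣ p ^ s) (pow_dvd_pow p hts)
  exact RingHom.congr_fun h i

@[simp] lemma cast_eq_ft (i : ZMod (p ^ t)) : (ZMod.cast i : ZMod p) = ft i := rfl
@[simp] lemma cast_eq_fs (i : ZMod (p ^ s)) : (ZMod.cast i : ZMod p) = fs i := rfl
lemma cast_eq_fts (hts : s ≤ t) (i : ZMod (p ^ t)) : (ZMod.cast i : ZMod (p ^ s)) = fts hts i := rfl

/-- parametrization of the subgroup `⟨a b^j, b^p, c⟩`. -/
def psi1 (j : ℕ) (hts : s ≤ t) :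
    Multiplicative (ZMod (p ^ t) × ZMod (p ^ (s - 1)) × ZMod p) →* GH p t s where
  toFun w :=
    ⟨w.toAdd.1, (j : ZMod (p ^ s)) * fts hts w.toAdd.1 + liftP p s w.toAdd.2.1, w.toAdd.2.2⟩
  map_one' := by ext <;> simp
  map_mul' v w := by
    ext <;> simp [toAdd_mul, Prod.fst_add, Prod.snd_add, map_add, fs_fts, fs_liftP] <;> ring

lemma psi1_apply_def (j : ℕ) (hts : s ≤ t)
    (w : Multiplicative (ZMod (p ^ t) × ZMod (p ^ (s - 1)) × ZMod p)) :
    psi1 (p := p) j hts w =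
      ⟨w.toAdd.1, (j : ZMod (p ^ s)) * fts hts w.toAdd.1 + liftP p s w.toAdd.2.1,
        w.toAdd.2.2⟩ := rfl

/-- parametrization of the subgroup `⟨a^p, b, c⟩`. -/
def psi2 : Multiplicative (ZMod (p ^ (t - 1)) × ZMod (p ^ s) × ZMod p) →* GH p t s where
  toFun w := ⟨liftP p t w.toAdd.1, w.toAdd.2.1, w.toAdd.2.2⟩
  map_one' := by ext <;> simp
  map_mul' v w := by
    ext <;> simp [toAdd_mul, Prod.fst_add, Prod.snd_add, map_add, ft_liftP] <;> ring

lemma psi2_apply_def (w : Multiplicative (ZMod (p ^ (t - 1)) × ZMod (p ^ s) × ZMod p)) :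
    psi2 (p := p) (t := t) (s := s) w =
      ⟨liftP p t w.toAdd.1, w.toAdd.2.1, w.toAdd.2.2⟩ := rfl

end GH



/-- in any group, if `g^n = 1` then `g ^ (m % n) = g ^ m`. -/
lemma pow_mod_eq {G : Type*} [Group G] {g : G} {n : ℕ} (hg : g ^ n = 1) (m : ℕ) :
    g ^ (m % n) = g ^ m := by
  conv_rhs => rw [← Nat.mod_add_div m n]
  rw [pow_add, pow_mul, hg, one_pow, mul_one]

lemma pow_val_add {G : Type*} [Group G] {g : G} {n : ℕ} [NeZero n] (hg : g ^ n = 1)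
    (x y : ZMod n) : g ^ (x + y).val = g ^ x.val * g ^ y.val := by
  rw [ZMod.val_add, pow_mod_eq hg, pow_add]

lemma pow_val_natCast {G : Type*} [Group G] {g : G} {n : ℕ} [NeZero n] (hg : g ^ n = 1)
    (m : ℕ) : g ^ ((m : ZMod n)).val = g ^ m := by
  rw [ZMod.val_natCast, pow_mod_eq hg]

namespace HS

variable (p t s : ℕ)

lemma relmk (r : FreeGroup (Fin 3)) (hr : r ∈ HRels p t s) :
    PresentedGroup.mk (HRels p t s) r = 1 := by
  change (QuotientGroup.mk r : Hgrp p t s) = 1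
  rw [QuotientGroup.eq_one_iff]
  exact Subgroup.subset_normalClosure hr

lemma aa_pow : aa p t s ^ p ^ t = 1 := by
  have h := relmk p t s (FreeGroup.of (0 : Fin 3) ^ p ^ t) (by simp [HRels])
  rw [map_pow] at h
  exact h

lemma bb_pow : bb p t s ^ p ^ s = 1 := by
  have h := relmk p t s (FreeGroup.of (1 : Fin 3) ^ p ^ s) (by simp [HRels])
  rw [map_pow] at h
  exact h

lemma cc_pow : cc p t s ^ p = 1 := by
  have h := relmk p t s (FreeGroup.of (2 : Fin 3) ^ p) (by simp [HRels])
  rw [map_pow] at h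
  exact h

lemma comm_ab : ⁅aa p t s, bb p t s⁆ = cc p t s := by
  have h := relmk p t s
    (⁅FreeGroup.of (0 : Fin 3), FreeGroup.of (1 : Fin 3)⁆ * (FreeGroup.of (2 : Fin 3))⁻¹)
    (by simp [HRels])
  rw [map_mul, map_inv, map_commutatorElement] at h
  exact mul_inv_eq_one.mp h

lemma comm_ca : Commute (cc p t s) (aa p t s) := by
  have h := relmk p t s ⁅FreeGroup.of (2 : Fin 3), FreeGroup.of (0 : Fin 3)⁆ (by simp [HRels])
  rw [map_commutatorElement] at h
  exact commutatorElement_eq_one_iff_commute.mp h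

lemma comm_cb : Commute (cc p t s) (bb p t s) := by
  have h := relmk p t s ⁅FreeGroup.of (2 : Fin 3), FreeGroup.of (1 : Fin 3)⁆ (by simp [HRels])
  rw [map_commutatorElement] at h
  exact commutatorElement_eq_one_iff_commute.mp h

lemma cc_central (g : Hgrp p t s) : Commute (cc p t s) g := by
  have hg : g ∈ Subgroup.centralizer {cc p t s} := by
    refine PresentedGroup.generated_by _ _ ?_ g
    intro j
    rw [Subgroup.mem_centralizer_iff]
    intro h hh
    rw [Set.mem_singleton_iff] at hh
    subst hh
    fin_cases j
    · exact (comm_ca p t s).eq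
    · exact (comm_cb p t s).eq
    · rfl
  exact (Subgroup.mem_centralizer_iff.mp hg (cc p t s) rfl)

/-- `b * a = (c⁻¹ * a) * b` -/
lemma ba : SemiconjBy (bb p t s) (aa p t s) ((cc p t s)⁻¹ * aa p t s) := by
  have h := comm_ab p t s
  rw [commutatorElement_def] at h
  show bb p t s * aa p t s = (cc p t s)⁻¹ * aa p t s * bb p t s
  rw [← h]
  group

lemma b_apow (n : ℕ) :
    SemiconjBy (bb p t s) (aa p t s ^ n) ((cc p t s ^ n)⁻¹ * aa p t s ^ n) := by
  have h := (ba p t s).pow_right n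
  rwa [((cc_central p t s (aa p t s)).inv_left).mul_pow, inv_pow] at h

lemma bpow_apow (m n : ℕ) :
    SemiconjBy (bb p t s ^ m) (aa p t s ^ n) ((cc p t s ^ (m * n))⁻¹ * aa p t s ^ n) := by
  induction m with
  | zero => simpa using SemiconjBy.one_left (aa p t s ^ n)
  | succ m ih =>
      have h1 := b_apow p t s n
      have step : SemiconjBy (bb p t s) ((cc p t s ^ (m * n))⁻¹ * aa p t s ^ n)
          ((cc p t s ^ ((m + 1) * n))⁻¹ * aa p t s ^ n) := by
        show bb p t s * ((cc p t s ^ (m * n))⁻¹ * aa p t s ^ n)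
            = (cc p t s ^ ((m + 1) * n))⁻¹ * aa p t s ^ n * bb p t s
        have hcm : Commute (bb p t s) ((cc p t s ^ (m * n))⁻¹) :=
          ((cc_central p t s (bb p t s)).pow_left (m * n)).inv_left.symm
        rw [← mul_assoc, hcm.eq, mul_assoc, h1.eq, ← mul_assoc, ← mul_assoc, ← mul_inv_rev]
        congr 2
        rw [← pow_add]
        congr 1
        ring
      rw [pow_succ']
      exact step.mul_left ih

/-- `b^m * a^n * b^(-m) ... ` as a plain equation. -/
lemma bpow_apow_eq (m n : ℕ) : bb p t s ^ m * aa p t s ^ n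
    = (cc p t s ^ (m * n))⁻¹ * aa p t s ^ n * bb p t s ^ m := (bpow_apow p t s m n).eq

end HS


namespace HS

variable (p t s : ℕ) [Fact (p ∣ p ^ t)] [Fact (p ∣ p ^ s)] [NeZero p]

open GH

/-- `c`-power with `ZMod p` exponent. -/
def CZ (w : ZMod p) : Hgrp p t s := cc p t s ^ w.val

lemma CZ_add (u v : ZMod p) : CZ p t s (u + v) = CZ p t s u * CZ p t s v :=
  pow_val_add (cc_pow p t s) u v

lemma CZ_natCast (n : ℕ) : CZ p t s ((n : ZMod p)) = cc p t s ^ n :=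
  pow_val_natCast (cc_pow p t s) n

@[simp] lemma CZ_zero : CZ p t s 0 = 1 := by
  simp [CZ]

lemma CZ_neg (u : ZMod p) : CZ p t s (-u) = (CZ p t s u)⁻¹ := by
  apply eq_inv_of_mul_eq_one_left
  rw [← CZ_add, neg_add_cancel, CZ_zero]

lemma CZ_central (w : ZMod p) (g : Hgrp p t s) : Commute (CZ p t s w) g :=
  (cc_central p t s g).pow_left _

lemma ft_val (i : ZMod (p ^ t)) : ((i.val : ℕ) : ZMod p) = ft i := by
  haveI : NeZero (p ^ t) := ⟨pow_ne_zero _ (NeZero.ne p)⟩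
  rw [ZMod.natCast_val]
  rfl

lemma fs_val (i : ZMod (p ^ s)) : ((i.val : ℕ) : ZMod p) = fs i := by
  haveI : NeZero (p ^ s) := ⟨pow_ne_zero _ (NeZero.ne p)⟩
  rw [ZMod.natCast_val]
  rfl

/-- the inverse homomorphism `GH → Hgrp`. -/
def theta (hp : p.Prime) (hodd : Odd p) : GH p t s →* Hgrp p t s where
  toFun v := CZ p t s (v.z - rr p * ft v.x * fs v.y) *
      (aa p t s ^ v.x.val * bb p t s ^ v.y.val)
  map_one' := by
    haveI : NeZero (p ^ t) := ⟨pow_ne_zero _ (NeZero.ne p)⟩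
    haveI : NeZero (p ^ s) := ⟨pow_ne_zero _ (NeZero.ne p)⟩
    simp
  map_mul' v w := by
    haveI : NeZero (p ^ t) := ⟨pow_ne_zero _ (NeZero.ne p)⟩
    haveI : NeZero (p ^ s) := ⟨pow_ne_zero _ (NeZero.ne p)⟩
    have h2 : (2 : ZMod p) * rr p = 1 := two_rr hp hodd
    simp only [GH.mul_x, GH.mul_y, GH.mul_z]
    have hexp : (v.z + w.z + rr p * (ft v.x * fs w.y - fs v.y * ft w.x))
          - rr p * ft (v.x + w.x) * fs (v.y + w.y)
        = (v.z - rr p * ft v.x * fs v.y) + ((w.z - rr p * ft w.x * fs w.y)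
          + (-(fs v.y * ft w.x))) := by
      simp only [map_add]
      linear_combination (-(fs v.y * ft w.x)) * h2
    rw [pow_val_add (aa_pow p t s), pow_val_add (bb_pow p t s), hexp, CZ_add, CZ_add, CZ_neg]
    have hq : CZ p t s (fs v.y * ft w.x) = cc p t s ^ (v.y.val * w.x.val) := by
      rw [← CZ_natCast]
      congr 1
      push_cast
      rw [fs_val p s v.y, ft_val p t w.x]
    rw [hq]
    -- now pure rearrangement using that powers of `c` are central
    have hmid : aa p t s ^ v.x.val * bb p t s ^ v.y.val *
          (aa p t s ^ w.x.val * bb p t s ^ w.y.val)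
        = (cc p t s ^ (v.y.val * w.x.val))⁻¹ *
          (aa p t s ^ v.x.val * aa p t s ^ w.x.val *
            (bb p t s ^ v.y.val * bb p t s ^ w.y.val)) := by
      have hcomm := bpow_apow_eq p t s v.y.val w.x.val
      have hc : Commute ((cc p t s ^ (v.y.val * w.x.val))⁻¹) (aa p t s ^ v.x.val) :=
        ((cc_central p t s (aa p t s ^ v.x.val)).pow_left _).inv_left
      calc aa p t s ^ v.x.val * bb p t s ^ v.y.val *
            (aa p t s ^ w.x.val * bb p t s ^ w.y.val)
          = aa p t s ^ v.x.val * (bb p t s ^ v.y.val * aa p t s ^ w.x.val) *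
              bb p t s ^ w.y.val := by group
        _ = aa p t s ^ v.x.val * ((cc p t s ^ (v.y.val * w.x.val))⁻¹ *
              aa p t s ^ w.x.val * bb p t s ^ v.y.val) * bb p t s ^ w.y.val := by rw [hcomm]
        _ = (cc p t s ^ (v.y.val * w.x.val))⁻¹ *
              (aa p t s ^ v.x.val * aa p t s ^ w.x.val *
                (bb p t s ^ v.y.val * bb p t s ^ w.y.val)) := by
            rw [← mul_assoc, ← mul_assoc, ← hc.eq]
            group
    have hcz1 : Commute (CZ p t s (w.z - rr p * ft w.x * fs w.y))
        (aa p t s ^ v.x.val * bb p t s ^ v.y.val) := CZ_central p t s _ _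
    calc CZ p t s (v.z - rr p * ft v.x * fs v.y) *
          (CZ p t s (w.z - rr p * ft w.x * fs w.y) * (cc p t s ^ (v.y.val * w.x.val))⁻¹) *
          (aa p t s ^ v.x.val * aa p t s ^ w.x.val *
            (bb p t s ^ v.y.val * bb p t s ^ w.y.val))
        = CZ p t s (v.z - rr p * ft v.x * fs v.y) *
            (CZ p t s (w.z - rr p * ft w.x * fs w.y) *
              (aa p t s ^ v.x.val * bb p t s ^ v.y.val *
                (aa p t s ^ w.x.val * bb p t s ^ w.y.val))) := by
          rw [hmid]
          group
      _ = CZ p t s (v.z - rr p * ft v.x * fs v.y) *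
            (aa p t s ^ v.x.val * bb p t s ^ v.y.val) *
            (CZ p t s (w.z - rr p * ft w.x * fs w.y) *
              (aa p t s ^ w.x.val * bb p t s ^ w.y.val)) := by
          have hswap : CZ p t s (w.z - rr p * ft w.x * fs w.y) *
              ((aa p t s ^ v.x.val * bb p t s ^ v.y.val) *
                (aa p t s ^ w.x.val * bb p t s ^ w.y.val))
              = (aa p t s ^ v.x.val * bb p t s ^ v.y.val) *
                (CZ p t s (w.z - rr p * ft w.x * fs w.y) *
                  (aa p t s ^ w.x.val * bb p t s ^ w.y.val)) := by
            rw [← mul_assoc, hcz1.eq, mul_assoc]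
          rw [hswap, ← mul_assoc]

/-- images of the generators in the model. -/
def fmodel : Fin 3 → GH p t s := ![aG, bG, cG]

lemma relations_hold (hp : p.Prime) (hodd : Odd p) :
    ∀ r ∈ HRels p t s, FreeGroup.lift (fmodel p t s) r = 1 := by
  intro r hr
  simp only [HRels, Set.mem_insert_iff, Set.mem_singleton_iff] at hr
  rcases hr with rfl | rfl | rfl | rfl | rfl | rfl
  · rw [map_pow, FreeGroup.lift_apply_of]
    show (aG : GH p t s) ^ p ^ t = 1
    ext <;> simp [aG, ZMod.natCast_self]
  · rw [map_pow, FreeGroup.lift_apply_of]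
    show (bG : GH p t s) ^ p ^ s = 1
    ext <;> simp [bG, ZMod.natCast_self]
  · rw [map_pow, FreeGroup.lift_apply_of]
    show (cG : GH p t s) ^ p = 1
    ext <;> simp [cG, ZMod.natCast_self]
  · rw [map_mul, map_inv, map_commutatorElement, FreeGroup.lift_apply_of, FreeGroup.lift_apply_of,
      FreeGroup.lift_apply_of]
    show ⁅(aG : GH p t s), (bG : GH p t s)⁆ * cG⁻¹ = 1
    rw [commutator_ab hp hodd, mul_inv_cancel]
  · rw [map_commutatorElement, FreeGroup.lift_apply_of, FreeGroup.lift_apply_of]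
    exact commutator_ca
  · rw [map_commutatorElement, FreeGroup.lift_apply_of, FreeGroup.lift_apply_of]
    exact commutator_cb

/-- the homomorphism `Hgrp → GH`. -/
def pihom (hp : p.Prime) (hodd : Odd p) : Hgrp p t s →* GH p t s :=
  PresentedGroup.toGroup (relations_hold p t s hp hodd)

@[simp] lemma pihom_aa (hp : p.Prime) (hodd : Odd p) : pihom p t s hp hodd (aa p t s) = aG :=
  PresentedGroup.toGroup.of _

@[simp] lemma pihom_bb (hp : p.Prime) (hodd : Odd p) : pihom p t s hp hodd (bb p t s) = bG :=
  PresentedGroup.toGroup.of _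

@[simp] lemma pihom_cc (hp : p.Prime) (hodd : Odd p) : pihom p t s hp hodd (cc p t s) = cG :=
  PresentedGroup.toGroup.of _


/-! ### the equivalence `Hgrp ≃* GH` -/

lemma val_one_pt (hp : p.Prime) (ht : 1 ≤ t) : (1 : ZMod (p ^ t)).val = 1 := by
  haveI : Fact (1 < p ^ t) := ⟨Nat.one_lt_pow (by omega) hp.one_lt⟩
  exact ZMod.val_one _

/-- the equivalence between the presented group and the model. -/
def EH (hp : p.Prime) (hodd : Odd p) (hs : 1 ≤ s) (hts : s ≤ t) :
    Hgrp p t s ≃* GH p t s where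
  toFun := pihom p t s hp hodd
  invFun := theta p t s hp hodd
  map_mul' := map_mul _
  left_inv := by
    haveI : NeZero (p ^ t) := ⟨pow_ne_zero _ (NeZero.ne p)⟩
    haveI : NeZero (p ^ s) := ⟨pow_ne_zero _ (NeZero.ne p)⟩
    haveI : Fact (1 < p) := ⟨hp.one_lt⟩
    have hcomp : (theta p t s hp hodd).comp (pihom p t s hp hodd) = MonoidHom.id _ := by
      apply PresentedGroup.ext
      intro x
      fin_cases x
      · show theta p t s hp hodd (pihom p t s hp hodd (aa p t s)) = aa p t s
        rw [pihom_aa]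
        show CZ p t s ((0 : ZMod p) - rr p * ft (1 : ZMod (p ^ t)) * fs (0 : ZMod (p ^ s))) *
          (aa p t s ^ (1 : ZMod (p ^ t)).val * bb p t s ^ (0 : ZMod (p ^ s)).val) = aa p t s
        rw [val_one_pt p t hp (hs.trans hts)]
        simp
      · show theta p t s hp hodd (pihom p t s hp hodd (bb p t s)) = bb p t s
        rw [pihom_bb]
        show CZ p t s ((0 : ZMod p) - rr p * ft (0 : ZMod (p ^ t)) * fs (1 : ZMod (p ^ s))) *
          (aa p t s ^ (0 : ZMod (p ^ t)).val * bb p t s ^ (1 : ZMod (p ^ s)).val) = bb p t s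
        rw [val_one_pt p s hp hs]
        simp
      · show theta p t s hp hodd (pihom p t s hp hodd (cc p t s)) = cc p t s
        rw [pihom_cc]
        show CZ p t s ((1 : ZMod p) - rr p * ft (0 : ZMod (p ^ t)) * fs (0 : ZMod (p ^ s))) *
          (aa p t s ^ (0 : ZMod (p ^ t)).val * bb p t s ^ (0 : ZMod (p ^ s)).val) = cc p t s
        have h1 : ((1 : ZMod p) - rr p * ft (0 : ZMod (p ^ t)) * fs (0 : ZMod (p ^ s))) = 1 := by
          simp
        rw [h1]
        have h2 : CZ p t s 1 = cc p t s := by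
          rw [CZ, ZMod.val_one]
          exact pow_one _
        rw [h2]
        simp
    exact fun g => DFunLike.congr_fun hcomp g
  right_inv := by
    haveI : NeZero (p ^ t) := ⟨pow_ne_zero _ (NeZero.ne p)⟩
    haveI : NeZero (p ^ s) := ⟨pow_ne_zero _ (NeZero.ne p)⟩
    intro v
    show pihom p t s hp hodd (theta p t s hp hodd v) = v
    have hth : theta p t s hp hodd v = CZ p t s (v.z - rr p * ft v.x * fs v.y) *
        (aa p t s ^ v.x.val * bb p t s ^ v.y.val) := rfl
    rw [hth, map_mul, map_mul, map_pow, map_pow, CZ, map_pow, pihom_aa, pihom_bb, pihom_cc]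
    ext <;>
      simp [aG, bG, cG, ZMod.natCast_val, ZMod.cast_id] <;>
      ring

/-! ### images of the subgroup generators in the model -/

/-- the model image of `a * b^j`. -/
def uj (j : ℕ) : GH p t s := ⟨1, (j : ZMod (p ^ s)), rr p * (j : ZMod p)⟩

lemma pihom_abj (hp : p.Prime) (hodd : Odd p) (j : ℕ) :
    pihom p t s hp hodd (aa p t s * bb p t s ^ j) = uj p t s j := by
  rw [map_mul, map_pow, pihom_aa, pihom_bb]
  ext <;> simp [aG, bG, uj, map_natCast] <;> ring

lemma bG_pow_p : (bG : GH p t s) ^ p = ⟨0, (p : ZMod (p ^ s)), 0⟩ := by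
  ext <;> simp [bG]

lemma aG_pow_p : (aG : GH p t s) ^ p = ⟨(p : ZMod (p ^ t)), 0, 0⟩ := by
  ext <;> simp [aG]

lemma liftP_one_eq (hp : p.Prime) (hs : 1 ≤ s) :
    liftP p s (1 : ZMod (p ^ (s - 1))) = (p : ZMod (p ^ s)) := by
  rcases Nat.lt_or_ge s 2 with h2 | h2
  · -- s = 1
    have hs1 : s = 1 := by omega
    subst hs1
    have : ((p : ℕ) : ZMod (p ^ 1)) = 0 := by
      rw [ZMod.natCast_eq_zero_iff]
      rw [pow_one]
    rw [liftP_apply, this, zero_mul]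
  · haveI : Fact (1 < p ^ (s - 1)) := ⟨Nat.one_lt_pow (by omega) hp.one_lt⟩
    rw [liftP_apply, ZMod.val_one]
    simp

/-- `psi1` in terms of the generators. -/
lemma psi1_apply_gens (hp : p.Prime) (hts : s ≤ t) (j : ℕ) (i : ZMod (p ^ t))
    (m : ZMod (p ^ (s - 1))) (k : ZMod p) :
    GH.psi1 (p := p) j hts (Multiplicative.ofAdd (i, m, k)) =
      uj p t s j ^ i.val * (bG ^ p) ^ m.val * cG ^ ((k - rr p * (j : ZMod p) * ft i)).val := by
  haveI : NeZero (p ^ t) := ⟨pow_ne_zero _ (NeZero.ne p)⟩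
  haveI : NeZero (p ^ s) := ⟨pow_ne_zero _ (NeZero.ne p)⟩
  rw [← pow_mul]
  ext <;>
    simp [uj, bG, cG, GH.psi1_apply_def, liftP_apply, ZMod.natCast_val, ZMod.cast_id,
      cast_eq_fts hts, map_natCast, ZMod.natCast_self] <;>
    (try push_cast) <;>
    (try ring)

/-- `psi2` in terms of the generators. -/
lemma psi2_apply_gens (hp : p.Prime) (i : ZMod (p ^ (t - 1)))
    (m : ZMod (p ^ s)) (k : ZMod p) :
    GH.psi2 (p := p) (t := t) (s := s) (Multiplicative.ofAdd (i, m, k)) =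
      (aG ^ p) ^ i.val * bG ^ m.val * cG ^ k.val := by
  haveI : NeZero (p ^ t) := ⟨pow_ne_zero _ (NeZero.ne p)⟩
  haveI : NeZero (p ^ s) := ⟨pow_ne_zero _ (NeZero.ne p)⟩
  rw [← pow_mul]
  ext <;>
    simp [aG, bG, cG, GH.psi2_apply_def, liftP_apply, ZMod.natCast_val, ZMod.cast_id,
      map_natCast, ZMod.natCast_self] <;>
    (try push_cast) <;>
    (try ring)

lemma range_psi1 (hp : p.Prime) (hs : 1 ≤ s) (hts : s ≤ t) (j : ℕ) :
    (GH.psi1 (p := p) j hts).range =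
      Subgroup.closure {uj p t s j, bG ^ p, cG} := by
  haveI : NeZero (p ^ t) := ⟨pow_ne_zero _ (NeZero.ne p)⟩
  haveI : NeZero (p ^ s) := ⟨pow_ne_zero _ (NeZero.ne p)⟩
  apply le_antisymm
  · rintro g ⟨w, rfl⟩
    rw [show w = Multiplicative.ofAdd (w.toAdd.1, w.toAdd.2.1, w.toAdd.2.2) from rfl,
      psi1_apply_gens p t s hp hts]
    refine mul_mem (mul_mem (pow_mem (Subgroup.subset_closure ?_) _)
      (pow_mem (Subgroup.subset_closure ?_) _)) (pow_mem (Subgroup.subset_closure ?_) _) <;> simp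
  · rw [Subgroup.closure_le]
    rintro g (rfl | rfl | rfl)
    · exact ⟨Multiplicative.ofAdd (1, 0, rr p * (j : ZMod p)), by
        ext
        · show (1 : ZMod (p ^ t)) = _
          rfl
        · show (j : ZMod (p ^ s)) * fts hts 1 + liftP p s 0 = _
          simp [uj]
        · show rr p * (j : ZMod p) = _
          rfl⟩
    · exact ⟨Multiplicative.ofAdd (0, 1, 0), by
        rw [bG_pow_p]
        ext
        · show (0 : ZMod (p ^ t)) = _
          rfl
        · show (j : ZMod (p ^ s)) * fts hts 0 + liftP p s 1 = _
          rw [liftP_one_eq p s hp hs]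
          simp
        · show (0 : ZMod p) = _
          rfl⟩
    · exact ⟨Multiplicative.ofAdd (0, 0, 1), by
        ext
        · show (0 : ZMod (p ^ t)) = _
          rfl
        · show (j : ZMod (p ^ s)) * fts hts 0 + liftP p s 0 = _
          simp [cG]
        · show (1 : ZMod p) = _
          rfl⟩

lemma range_psi2 (hp : p.Prime) (ht : 1 ≤ t) :
    (GH.psi2 (p := p) (t := t) (s := s)).range =
      Subgroup.closure {aG ^ p, bG, cG} := by
  haveI : NeZero (p ^ t) := ⟨pow_ne_zero _ (NeZero.ne p)⟩
  haveI : NeZero (p ^ s) := ⟨pow_ne_zero _ (NeZero.ne p)⟩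
  apply le_antisymm
  · rintro g ⟨w, rfl⟩
    rw [show w = Multiplicative.ofAdd (w.toAdd.1, w.toAdd.2.1, w.toAdd.2.2) from rfl,
      psi2_apply_gens p t s hp]
    refine mul_mem (mul_mem (pow_mem (Subgroup.subset_closure ?_) _)
      (pow_mem (Subgroup.subset_closure ?_) _)) (pow_mem (Subgroup.subset_closure ?_) _) <;> simp
  · rw [Subgroup.closure_le]
    rintro g (rfl | rfl | rfl)
    · exact ⟨Multiplicative.ofAdd (1, 0, 0), by
        rw [aG_pow_p]
        ext
        · show liftP p t 1 = _
          rw [liftP_one_eq p t hp ht]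
        · show (0 : ZMod (p ^ s)) = _
          rfl
        · show (0 : ZMod p) = _
          rfl⟩
    · exact ⟨Multiplicative.ofAdd (0, 1, 0), by
        ext
        · show liftP p t 0 = _
          simp [bG]
        · show (1 : ZMod (p ^ s)) = _
          rfl
        · show (0 : ZMod p) = _
          rfl⟩
    · exact ⟨Multiplicative.ofAdd (0, 0, 1), by
        ext
        · show liftP p t 0 = _
          simp [cG]
        · show (0 : ZMod (p ^ s)) = _
          rfl
        · show (1 : ZMod p) = _
          rfl⟩

lemma psi1_injective (hp : p.Prime) (hs : 1 ≤ s) (hts : s ≤ t) (j : ℕ) :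
    Function.Injective (GH.psi1 (p := p) j hts) := by
  haveI : NeZero (p ^ t) := ⟨pow_ne_zero _ (NeZero.ne p)⟩
  haveI : NeZero (p ^ s) := ⟨pow_ne_zero _ (NeZero.ne p)⟩
  haveI : NeZero (p ^ (s - 1)) := ⟨pow_ne_zero _ (NeZero.ne p)⟩
  rw [injective_iff_map_eq_one]
  intro w hw
  set i := w.toAdd.1 with hidef
  set m := w.toAdd.2.1 with hmdef
  set k := w.toAdd.2.2 with hkdef
  have hx : i = 0 := congrArg GH.x hw
  have hz : k = 0 := congrArg GH.z hw
  have hy : (j : ZMod (p ^ s)) * fts hts i + liftP p s m = 0 := congrArg GH.y hw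
  rw [hx, map_zero, mul_zero, zero_add] at hy
  -- liftP m = 0 → m = 0
  have hm : m = 0 := by
    rw [liftP_apply] at hy
    have : ((p * m.val : ℕ) : ZMod (p ^ s)) = 0 := by push_cast; exact hy
    rw [ZMod.natCast_eq_zero_iff] at this
    have hps : p ^ s = p * p ^ (s - 1) := by
      rw [← pow_succ']; congr 1; omega
    rw [hps] at this
    have hdvd : p ^ (s - 1) ∣ m.val :=
      (mul_dvd_mul_iff_left (by exact_mod_cast hp.ne_zero : (p : ℕ) ≠ 0)).mp this
    have hlt : m.val < p ^ (s - 1) := ZMod.val_lt m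
    exact (ZMod.val_eq_zero m).mp (Nat.eq_zero_of_dvd_of_lt hdvd hlt)
  have hadd : w.toAdd = ((0 : ZMod (p ^ t)), (0 : ZMod (p ^ (s - 1))), (0 : ZMod p)) := by
    rw [show w.toAdd = (i, m, k) from rfl, hx, hm, hz]
  exact congrArg Multiplicative.ofAdd hadd

lemma psi2_injective (hp : p.Prime) (ht : 1 ≤ t) :
    Function.Injective (GH.psi2 (p := p) (t := t) (s := s)) := by
  haveI : NeZero (p ^ t) := ⟨pow_ne_zero _ (NeZero.ne p)⟩
  haveI : NeZero (p ^ s) := ⟨pow_ne_zero _ (NeZero.ne p)⟩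
  haveI : NeZero (p ^ (t - 1)) := ⟨pow_ne_zero _ (NeZero.ne p)⟩
  rw [injective_iff_map_eq_one]
  intro w hw
  set i := w.toAdd.1 with hidef
  set m := w.toAdd.2.1 with hmdef
  set k := w.toAdd.2.2 with hkdef
  have hx : liftP p t i = 0 := congrArg GH.x hw
  have hy : m = 0 := congrArg GH.y hw
  have hz : k = 0 := congrArg GH.z hw
  have hi : i = 0 := by
    rw [liftP_apply] at hx
    have : ((p * i.val : ℕ) : ZMod (p ^ t)) = 0 := by push_cast; exact hx
    rw [ZMod.natCast_eq_zero_iff] at this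
    have hpt : p ^ t = p * p ^ (t - 1) := by
      rw [← pow_succ']; congr 1; omega
    rw [hpt] at this
    have hdvd : p ^ (t - 1) ∣ i.val :=
      (mul_dvd_mul_iff_left (by exact_mod_cast hp.ne_zero : (p : ℕ) ≠ 0)).mp this
    have hlt : i.val < p ^ (t - 1) := ZMod.val_lt i
    exact (ZMod.val_eq_zero i).mp (Nat.eq_zero_of_dvd_of_lt hdvd hlt)
  have hadd : w.toAdd = ((0 : ZMod (p ^ (t - 1))), (0 : ZMod (p ^ s)), (0 : ZMod p)) := by
    rw [show w.toAdd = (i, m, k) from rfl, hi, hy, hz]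
  exact congrArg Multiplicative.ofAdd hadd

end HS

/-! ### the main theorem -/


theorem stmt6 (p t s : ℕ) (hp : p.Prime) (hodd : Odd p) (hs : 1 ≤ s) (hts : s ≤ t) :
    (∀ M : Subgroup (Hgrp p t s), IsCoatom M →
      ((∃ j < p, M = Subgroup.closure {aa p t s * bb p t s ^ j, bb p t s ^ p, cc p t s}) ∨
        M = Subgroup.closure {aa p t s ^ p, bb p t s, cc p t s})) ∧
    (∀ j < p, Nonempty
      ((Subgroup.closure {aa p t s * bb p t s ^ j, bb p t s ^ p, cc p t s} : Subgroup (Hgrp p t s)) ≃*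
        Multiplicative (ZMod (p ^ t) × ZMod (p ^ (s - 1)) × ZMod p))) ∧
    Nonempty
      ((Subgroup.closure {aa p t s ^ p, bb p t s, cc p t s} : Subgroup (Hgrp p t s)) ≃*
        Multiplicative (ZMod (p ^ (t - 1)) × ZMod (p ^ s) × ZMod p)) := by
  haveI hfact1 : Fact (p ∣ p ^ t) := ⟨dvd_pow_self p (by omega : t ≠ 0)⟩
  haveI hfact2 : Fact (p ∣ p ^ s) := ⟨dvd_pow_self p (by omega : s ≠ 0)⟩
  haveI : NeZero p := ⟨hp.ne_zero⟩
  haveI : Fact p.Prime := ⟨hp⟩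
  set E := HS.EH p t s hp hodd hs hts with hE
  haveI : Finite (Hgrp p t s) := Finite.of_equiv _ E.symm.toEquiv
  have hcardG : Nat.card (Hgrp p t s) = p ^ (t + s + 1) := by
    rw [Nat.card_congr E.toEquiv, GH.card_GH]
    ring
  have harith1 : p ^ t * (p ^ (s - 1) * p) = p ^ (t + s) := by
    rw [← pow_succ, ← pow_add]; congr 1; omega
  have harith2 : p ^ (t - 1) * (p ^ s * p) = p ^ (t + s) := by
    rw [← pow_succ, ← pow_add]; congr 1; omega
  have e2 : E (bb p t s) = GH.bG := HS.pihom_bb p t s hp hodd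
  have e3 : E (cc p t s) = GH.cG := HS.pihom_cc p t s hp hodd
  have hmap1 : ∀ j : ℕ, Subgroup.map E.toMonoidHom
      (Subgroup.closure {aa p t s * bb p t s ^ j, bb p t s ^ p, cc p t s})
      = (GH.psi1 (p := p) j hts).range := by
    intro j
    have e1 : E (aa p t s * bb p t s ^ j) = HS.uj p t s j := HS.pihom_abj p t s hp hodd j
    have e2' : E (bb p t s ^ p) = GH.bG ^ p := by rw [map_pow, e2]
    rw [MonoidHom.map_closure, HS.range_psi1 p t s hp hs hts j]
    congr 1
    rw [show (⇑E.toMonoidHom) = ⇑E from rfl, Set.image_insert_eq, Set.image_insert_eq,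
      Set.image_singleton, e1, e2', e3]
  have hmap2 : Subgroup.map E.toMonoidHom
      (Subgroup.closure {aa p t s ^ p, bb p t s, cc p t s})
      = (GH.psi2 (p := p) (t := t) (s := s)).range := by
    have e1 : E (aa p t s ^ p) = GH.aG ^ p := by
      rw [map_pow, show E (aa p t s) = GH.aG from HS.pihom_aa p t s hp hodd]
    rw [MonoidHom.map_closure, HS.range_psi2 p t s hp (hs.trans hts)]
    congr 1
    rw [show (⇑E.toMonoidHom) = ⇑E from rfl, Set.image_insert_eq, Set.image_insert_eq,
      Set.image_singleton, e1, e2, e3]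
  have hcard1 : ∀ j : ℕ, Nat.card
      (Subgroup.closure {aa p t s * bb p t s ^ j, bb p t s ^ p, cc p t s}) = p ^ (t + s) := by
    intro j
    have hc := Nat.card_congr (MulEquiv.subgroupMap E
      (Subgroup.closure {aa p t s * bb p t s ^ j, bb p t s ^ p, cc p t s})).toEquiv
    rw [show ((↑E : Hgrp p t s →* GH p t s)) = E.toMonoidHom from rfl, hmap1 j] at hc
    have hc2 := Nat.card_congr (MonoidHom.ofInjective
      (HS.psi1_injective p t s hp hs hts j)).toEquiv
    rw [hc, ← hc2, Nat.card_congr Multiplicative.toAdd, Nat.card_prod, Nat.card_prod,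
      Nat.card_zmod, Nat.card_zmod, Nat.card_zmod]
    exact harith1
  have hcard2 : Nat.card
      (Subgroup.closure {aa p t s ^ p, bb p t s, cc p t s} : Subgroup (Hgrp p t s))
      = p ^ (t + s) := by
    have hc := Nat.card_congr (MulEquiv.subgroupMap E
      (Subgroup.closure {aa p t s ^ p, bb p t s, cc p t s})).toEquiv
    rw [show ((↑E : Hgrp p t s →* GH p t s)) = E.toMonoidHom from rfl, hmap2] at hc
    have hc2 := Nat.card_congr (MonoidHom.ofInjective
      (HS.psi2_injective p t s hp (hs.trans hts))).toEquiv
    rw [hc, ← hc2, Nat.card_congr Multiplicative.toAdd, Nat.card_prod, Nat.card_prod,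
      Nat.card_zmod, Nat.card_zmod, Nat.card_zmod]
    exact harith2
  refine ⟨?_, ?_, ?_⟩
  · -- classification of maximal subgroups
    intro M hM
    have hpg : IsPGroup p (Hgrp p t s) := IsPGroup.of_card hcardG
    haveI : Group.IsNilpotent (Hgrp p t s) := hpg.isNilpotent
    haveI hMnormal : M.Normal :=
      Subgroup.NormalizerCondition.normal_of_coatom M normalizerCondition_of_isNilpotent hM
    set q := QuotientGroup.mk' M with hqdef
    have hker : q.ker = M := QuotientGroup.ker_mk' M
    have hmemM : ∀ g : Hgrp p t s, q g = 1 → g ∈ M := by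
      intro g h
      rw [← hker, MonoidHom.mem_ker]
      exact h
    have hMq : ∀ g : Hgrp p t s, g ∈ M → q g = 1 := by
      intro g h
      rw [← hker, MonoidHom.mem_ker] at h
      exact h
    have hgen : ∀ x : Hgrp p t s ⧸ M, x ≠ 1 → Subgroup.zpowers x = ⊤ := by
      intro x hx
      have hle : M ≤ (Subgroup.zpowers x).comap q := by
        intro g hg
        rw [Subgroup.mem_comap, hMq g hg]
        exact one_mem _
      rcases lt_or_eq_of_le hle with hlt | heq
      · have htop := hM.2 _ hlt
        have hmc := Subgroup.map_comap_eq_self_of_surjective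
          (QuotientGroup.mk'_surjective M) (Subgroup.zpowers x)
        rw [htop] at hmc
        rw [← hmc]
        exact Subgroup.map_top_of_surjective _ (QuotientGroup.mk'_surjective M)
      · exfalso
        have hmc := Subgroup.map_comap_eq_self_of_surjective
          (QuotientGroup.mk'_surjective M) (Subgroup.zpowers x)
        rw [← heq] at hmc
        have hbot : Subgroup.map q M = ⊥ :=
          (Subgroup.map_eq_bot_iff M).mpr (le_of_eq hker.symm)
        rw [hbot] at hmc
        have hxx := Subgroup.mem_zpowers x
        rw [← hmc] at hxx
        exact hx (Subgroup.mem_bot.mp hxx)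
    obtain ⟨g0, hg0⟩ : ∃ g : Hgrp p t s, g ∉ M := by
      by_contra hcon
      push_neg at hcon
      exact hM.1 ((Subgroup.eq_top_iff' M).mpr hcon)
    have hq0 : q g0 ≠ 1 := fun h => hg0 (hmemM g0 h)
    haveI : Finite (Hgrp p t s ⧸ M) := Quotient.finite _
    have hAp : IsPGroup p (Hgrp p t s ⧸ M) := hpg.to_quotient M
    obtain ⟨n, hn⟩ := IsPGroup.iff_card.mp hAp
    have hord0 : orderOf (q g0) = p ^ n := by
      rw [← hn, ← Nat.card_zpowers]
      calc Nat.card (Subgroup.zpowers (q g0))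
          = Nat.card (⊤ : Subgroup (Hgrp p t s ⧸ M)) := by rw [hgen (q g0) hq0]
        _ = Nat.card (Hgrp p t s ⧸ M) := Nat.card_congr Subgroup.topEquiv.toEquiv
    have hn1 : 1 ≤ n := by
      by_contra hcon
      push_neg at hcon
      interval_cases n
      rw [pow_zero] at hord0
      exact hq0 (orderOf_eq_one_iff.mp hord0)
    have hordy : orderOf (q g0 ^ p ^ (n - 1)) = p := by
      rw [orderOf_pow, hord0, Nat.gcd_eq_right (pow_dvd_pow p (by omega))]
      have hsplit : p ^ n = p ^ (n - 1) * p := by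
        rw [← pow_succ]; congr 1; omega
      rw [hsplit]
      exact Nat.mul_div_cancel_left p (Nat.pow_pos hp.pos)
    have hyne : q g0 ^ p ^ (n - 1) ≠ 1 := by
      intro h
      rw [h, orderOf_one] at hordy
      exact hp.ne_one hordy.symm
    have hcardA : Nat.card (Hgrp p t s ⧸ M) = p := by
      calc Nat.card (Hgrp p t s ⧸ M)
          = Nat.card (⊤ : Subgroup (Hgrp p t s ⧸ M)) :=
            (Nat.card_congr Subgroup.topEquiv.toEquiv).symm
        _ = Nat.card (Subgroup.zpowers (q g0 ^ p ^ (n - 1))) := by rw [← hgen _ hyne]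
        _ = p := by rw [Nat.card_zpowers, hordy]
    have hcardM : Nat.card M = p ^ (t + s) := by
      have h1 := Subgroup.card_mul_index M
      rw [Subgroup.index_eq_card, hcardA, hcardG] at h1
      refine Nat.eq_of_mul_eq_mul_right hp.pos ?_
      rw [h1, ← pow_succ]
    have hcommA : ∀ u v : Hgrp p t s ⧸ M, Commute u v := by
      intro u v
      have hu : u ∈ Subgroup.zpowers (q g0 ^ p ^ (n - 1)) := by
        rw [hgen _ hyne]; trivial
      have hv : v ∈ Subgroup.zpowers (q g0 ^ p ^ (n - 1)) := by
        rw [hgen _ hyne]; trivial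
      rw [Subgroup.mem_zpowers_iff] at hu hv
      obtain ⟨iu, rfl⟩ := hu
      obtain ⟨iv, rfl⟩ := hv
      exact (Commute.refl _).zpow_zpow iu iv
    have hqcc : q (cc p t s) = 1 := by
      rw [← HS.comm_ab p t s, map_commutatorElement]
      exact commutatorElement_eq_one_iff_commute.mpr (hcommA _ _)
    have hexpp : ∀ u : Hgrp p t s ⧸ M, u ^ p = 1 := by
      intro u
      have hdvd := orderOf_dvd_natCard u
      rw [hcardA] at hdvd
      exact orderOf_dvd_iff_pow_eq_one.mp hdvd
    by_cases hbq : q (bb p t s) = 1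
    · right
      have hNM : Subgroup.closure {aa p t s ^ p, bb p t s, cc p t s} ≤ M := by
        rw [Subgroup.closure_le]
        rintro g (rfl | rfl | rfl)
        · exact hmemM _ (by rw [map_pow]; exact hexpp _)
        · exact hmemM _ hbq
        · exact hmemM _ hqcc
      exact (Subgroup.eq_of_le_of_card_ge hNM
        (le_of_eq (by rw [hcard2, hcardM]))).symm
    · left
      have hordb : orderOf (q (bb p t s)) = p := by
        calc orderOf (q (bb p t s))
            = Nat.card (Subgroup.zpowers (q (bb p t s))) := (Nat.card_zpowers _).symm
          _ = Nat.card (⊤ : Subgroup (Hgrp p t s ⧸ M)) := by rw [hgen _ hbq]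
          _ = Nat.card (Hgrp p t s ⧸ M) := Nat.card_congr Subgroup.topEquiv.toEquiv
          _ = p := hcardA
      have haz : q (aa p t s) ∈ Subgroup.zpowers (q (bb p t s)) := by
        rw [hgen _ hbq]; trivial
      rw [Subgroup.mem_zpowers_iff] at haz
      obtain ⟨nz, hnz⟩ := haz
      have hppos : (0 : ℤ) < p := by exact_mod_cast hp.pos
      have h2 : 0 ≤ (-nz) % (p : ℤ) := Int.emod_nonneg _ (by exact_mod_cast hp.ne_zero)
      have h1 : (-nz) % (p : ℤ) < p := Int.emod_lt_of_pos _ hppos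
      refine ⟨((-nz) % (p : ℤ)).toNat, by omega, ?_⟩
      have hjz : ((((-nz) % (p : ℤ)).toNat : ℤ)) = (-nz) % (p : ℤ) := Int.toNat_of_nonneg h2
      have hjq : q (aa p t s * bb p t s ^ ((-nz) % (p : ℤ)).toNat) = 1 := by
        rw [map_mul, map_pow, ← hnz, ← zpow_natCast (q (bb p t s)) (((-nz) % (p : ℤ)).toNat),
          ← zpow_add]
        apply orderOf_dvd_iff_zpow_eq_one.mp
        rw [hordb, hjz]
        have hed := Int.emod_add_mul_ediv (-nz) (p : ℤ)
        exact ⟨-((-nz) / (p : ℤ)), by linarith⟩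
      have hNM : Subgroup.closure {aa p t s * bb p t s ^ ((-nz) % (p : ℤ)).toNat,
          bb p t s ^ p, cc p t s} ≤ M := by
        rw [Subgroup.closure_le]
        rintro g (rfl | rfl | rfl)
        · exact hmemM _ hjq
        · exact hmemM _ (by rw [map_pow]; exact hexpp _)
        · exact hmemM _ hqcc
      exact (Subgroup.eq_of_le_of_card_ge hNM
        (le_of_eq (by rw [hcard1, hcardM]))).symm
  · -- the subgroups ⟨a b^j, b^p, c⟩
    intro j hj
    exact ⟨((MulEquiv.subgroupMap E _).trans
      (MulEquiv.subgroupCongr (hmap1 j))).trans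
      (MonoidHom.ofInjective (HS.psi1_injective p t s hp hs hts j)).symm⟩
  · -- the subgroup ⟨a^p, b, c⟩
    exact ⟨((MulEquiv.subgroupMap E _).trans
      (MulEquiv.subgroupCongr hmap2)).trans
      (MonoidHom.ofInjective (HS.psi2_injective p t s hp (hs.trans hts))).symm⟩
end

section
/- Every maximal subgroup of H_{p,t,s} is abelian; that is, H_{p,t,s} is an inner-abelian group. -/
open scoped commutatorElement

@[ext]
structure Heis3 (p : ℕ) where
  x : ZMod p
  y : ZMod p
  z : ZMod p

namespace Heis3
variable {p : ℕ}

instance : Mul (Heis3 p) := ⟨fun a b => ⟨a.x + b.x, a.y + b.y, a.z + b.z + a.x * b.y⟩⟩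
instance : One (Heis3 p) := ⟨⟨0, 0, 0⟩⟩
instance : Inv (Heis3 p) := ⟨fun a => ⟨-a.x, -a.y, -a.z + a.x * a.y⟩⟩

@[simp] lemma mul_x (a b : Heis3 p) : (a * b).x = a.x + b.x := rfl
@[simp] lemma mul_y (a b : Heis3 p) : (a * b).y = a.y + b.y := rfl
@[simp] lemma mul_z (a b : Heis3 p) : (a * b).z = a.z + b.z + a.x * b.y := rfl
@[simp] lemma one_x : (1 : Heis3 p).x = 0 := rfl
@[simp] lemma one_y : (1 : Heis3 p).y = 0 := rfl
@[simp] lemma one_z : (1 : Heis3 p).z = 0 := rfl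
@[simp] lemma inv_x (a : Heis3 p) : (a⁻¹).x = -a.x := rfl
@[simp] lemma inv_y (a : Heis3 p) : (a⁻¹).y = -a.y := rfl
@[simp] lemma inv_z (a : Heis3 p) : (a⁻¹).z = -a.z + a.x * a.y := rfl

instance : Group (Heis3 p) where
  mul_assoc a b c := by ext <;> simp <;> ring
  one_mul a := by ext <;> simp
  mul_one a := by ext <;> simp
  inv_mul_cancel a := by ext <;> simp <;> ring

def A : Heis3 p := ⟨1, 0, 0⟩
def B : Heis3 p := ⟨0, 1, 0⟩
def C : Heis3 p := ⟨0, 0, 1⟩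

lemma A_pow (n : ℕ) : (A : Heis3 p) ^ n = ⟨(n : ZMod p), 0, 0⟩ := by
  induction n with
  | zero => ext <;> simp
  | succ n ih => rw [pow_succ, ih]; ext <;> simp [A] <;> push_cast <;> ring

lemma B_pow (n : ℕ) : (B : Heis3 p) ^ n = ⟨0, (n : ZMod p), 0⟩ := by
  induction n with
  | zero => ext <;> simp
  | succ n ih => rw [pow_succ, ih]; ext <;> simp [B] <;> push_cast <;> ring

lemma C_pow (n : ℕ) : (C : Heis3 p) ^ n = ⟨0, 0, (n : ZMod p)⟩ := by
  induction n with
  | zero => ext <;> simp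
  | succ n ih => rw [pow_succ, ih]; ext <;> simp [C] <;> push_cast <;> ring

end Heis3
namespace Haux
variable (p t s : ℕ)

lemma rel_one {r : FreeGroup (Fin 3)} (h : r ∈ HRels p t s) :
    PresentedGroup.mk (HRels p t s) r = 1 := by
  have : r ∈ Subgroup.normalClosure (HRels p t s) := Subgroup.subset_normalClosure h
  exact (QuotientGroup.eq_one_iff r).mpr this

lemma rel_a : (aa p t s) ^ (p ^ t) = 1 := by
  have := rel_one p t s (r := FreeGroup.of (0 : Fin 3) ^ p ^ t) (by simp [HRels])
  simpa [aa, PresentedGroup.of, map_pow] using this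

lemma rel_b : (bb p t s) ^ (p ^ s) = 1 := by
  have := rel_one p t s (r := FreeGroup.of (1 : Fin 3) ^ p ^ s) (by simp [HRels])
  simpa [bb, PresentedGroup.of, map_pow] using this

lemma rel_c : (cc p t s) ^ p = 1 := by
  have := rel_one p t s (r := FreeGroup.of (2 : Fin 3) ^ p) (by simp [HRels])
  simpa [cc, PresentedGroup.of, map_pow] using this

lemma rel_ab : ⁅aa p t s, bb p t s⁆ = cc p t s := by
  have := rel_one p t s
    (r := ⁅FreeGroup.of (0 : Fin 3), FreeGroup.of (1 : Fin 3)⁆ * (FreeGroup.of (2 : Fin 3))⁻¹)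
    (by simp [HRels])
  simp only [map_mul, map_inv, map_commutatorElement] at this
  have h := mul_inv_eq_one.mp this
  simpa [aa, bb, cc, PresentedGroup.of] using h

lemma rel_ca : Commute (cc p t s) (aa p t s) := by
  have := rel_one p t s (r := ⁅FreeGroup.of (2 : Fin 3), FreeGroup.of (0 : Fin 3)⁆)
    (by simp [HRels])
  rw [map_commutatorElement] at this
  have := commutatorElement_eq_one_iff_commute.mp this
  simpa [aa, cc, PresentedGroup.of] using this

lemma rel_cb : Commute (cc p t s) (bb p t s) := by
  have := rel_one p t s (r := ⁅FreeGroup.of (2 : Fin 3), FreeGroup.of (1 : Fin 3)⁆)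
    (by simp [HRels])
  rw [map_commutatorElement] at this
  have := commutatorElement_eq_one_iff_commute.mp this
  simpa [bb, cc, PresentedGroup.of] using this

end Haux

section Generic
variable {G : Type*} [Group G] {a b c : G}

lemma swap1 (hab : ⁅a, b⁆ = c) (hca : Commute c a) (i : ℤ) :
    b * a ^ i = c ^ (-i) * (a ^ i * b) := by
  have hba : b * a * b⁻¹ = c⁻¹ * a := by
    have h : a * b * a⁻¹ * b⁻¹ = c := hab
    rw [← h]; group
  have h2 : b * a ^ i * b⁻¹ = (c⁻¹ * a) ^ i := by
    rw [← hba, conj_zpow]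
  have h3 : (c⁻¹ * a) ^ i = c ^ (-i) * a ^ i := by
    rw [(hca.inv_left).mul_zpow, inv_zpow, zpow_neg]
  have key := h2.trans h3
  calc b * a ^ i = (b * a ^ i * b⁻¹) * b := by group
    _ = (c ^ (-i) * a ^ i) * b := by rw [key]
    _ = c ^ (-i) * (a ^ i * b) := by group

lemma swap1' (hab : ⁅a, b⁆ = c) (hca : Commute c a) (hcb : Commute c b) (i : ℤ) :
    b⁻¹ * a ^ i = c ^ i * (a ^ i * b⁻¹) := by
  have h := swap1 hab hca i
  have key : b * (c ^ i * (a ^ i * b⁻¹)) = b * (b⁻¹ * a ^ i) := by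
    calc b * (c ^ i * (a ^ i * b⁻¹)) = (b * c ^ i) * (a ^ i * b⁻¹) := by group
      _ = (c ^ i * b) * (a ^ i * b⁻¹) := by rw [(hcb.zpow_left i).eq]
      _ = c ^ i * ((b * a ^ i) * b⁻¹) := by group
      _ = c ^ i * ((c ^ (-i) * (a ^ i * b)) * b⁻¹) := by rw [h]
      _ = b * (b⁻¹ * a ^ i) := by group
  exact (mul_left_cancel key).symm

lemma swap (hab : ⁅a, b⁆ = c) (hca : Commute c a) (hcb : Commute c b) (i j : ℤ) :
    b ^ j * a ^ i = c ^ (-(i * j)) * (a ^ i * b ^ j) := by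
  induction j using Int.induction_on with
  | zero => simp
  | succ j ih =>
    have hc : Commute (b ^ (j : ℤ)) (c ^ (-i)) := (hcb.zpow_zpow (-i) j).symm
    have h1 : b ^ ((j : ℤ) + 1) = b ^ (j : ℤ) * b := by rw [zpow_add, zpow_one]
    calc b ^ ((j : ℤ) + 1) * a ^ i = b ^ (j : ℤ) * (b * a ^ i) := by rw [h1]; group
      _ = b ^ (j : ℤ) * (c ^ (-i) * (a ^ i * b)) := by rw [swap1 hab hca i]
      _ = (b ^ (j : ℤ) * c ^ (-i)) * (a ^ i * b) := by group
      _ = (c ^ (-i) * b ^ (j : ℤ)) * (a ^ i * b) := by rw [hc.eq]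
      _ = c ^ (-i) * ((b ^ (j : ℤ) * a ^ i) * b) := by group
      _ = c ^ (-i) * ((c ^ (-(i * j)) * (a ^ i * b ^ (j : ℤ))) * b) := by rw [ih]
      _ = (c ^ (-i) * c ^ (-(i * j))) * (a ^ i * (b ^ (j : ℤ) * b)) := by group
      _ = c ^ (-(i * ((j : ℤ) + 1))) * (a ^ i * b ^ ((j : ℤ) + 1)) := by
          rw [← zpow_add, h1]; ring_nf
  | pred j ih =>
    have hc : Commute (b ^ (-j : ℤ)) (c ^ i) := (hcb.zpow_zpow i (-j)).symm
    have h1 : b ^ (-(j : ℤ) - 1) = b ^ (-j : ℤ) * b⁻¹ := by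
      rw [← zpow_neg_one, ← zpow_add]; ring_nf
    calc b ^ (-(j : ℤ) - 1) * a ^ i = b ^ (-j : ℤ) * (b⁻¹ * a ^ i) := by rw [h1]; group
      _ = b ^ (-j : ℤ) * (c ^ i * (a ^ i * b⁻¹)) := by rw [swap1' hab hca hcb i]
      _ = (b ^ (-j : ℤ) * c ^ i) * (a ^ i * b⁻¹) := by group
      _ = (c ^ i * b ^ (-j : ℤ)) * (a ^ i * b⁻¹) := by rw [hc.eq]
      _ = c ^ i * ((b ^ (-j : ℤ) * a ^ i) * b⁻¹) := by group
      _ = c ^ i * ((c ^ (-(i * -j)) * (a ^ i * b ^ (-j : ℤ))) * b⁻¹) := by rw [ih]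
      _ = (c ^ i * c ^ (-(i * -j))) * (a ^ i * (b ^ (-j : ℤ) * b⁻¹)) := by group
      _ = c ^ (-(i * (-(j : ℤ) - 1))) * (a ^ i * b ^ (-(j : ℤ) - 1)) := by
          rw [← zpow_add, h1]; ring_nf

end Generic

section Generic2
variable {G : Type*} [Group G] {a b c : G}
lemma emul (hab : ⁅a, b⁆ = c) (hca : Commute c a) (hcb : Commute c b) (i j k i' j' k' : ℤ) :
    (a ^ i * b ^ j * c ^ k) * (a ^ i' * b ^ j' * c ^ k') =
      a ^ (i + i') * b ^ (j + j') * c ^ (k + k' - i' * j) := by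
  calc (a ^ i * b ^ j * c ^ k) * (a ^ i' * b ^ j' * c ^ k')
      = (a ^ i * b ^ j) * ((c ^ k * a ^ i') * (b ^ j' * c ^ k')) := by group
    _ = (a ^ i * b ^ j) * ((a ^ i' * c ^ k) * (b ^ j' * c ^ k')) := by
        rw [(hca.zpow_zpow k i').eq]
    _ = (a ^ i * (b ^ j * a ^ i')) * ((c ^ k * b ^ j') * c ^ k') := by group
    _ = (a ^ i * (c ^ (-(i' * j)) * (a ^ i' * b ^ j))) * ((b ^ j' * c ^ k) * c ^ k') := by
        rw [swap hab hca hcb i' j, (hcb.zpow_zpow k j').eq]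
    _ = ((a ^ i * c ^ (-(i' * j))) * a ^ i') * (b ^ j * (b ^ j' * (c ^ k * c ^ k'))) := by group
    _ = ((c ^ (-(i' * j)) * a ^ i) * a ^ i') * (b ^ j * (b ^ j' * (c ^ k * c ^ k'))) := by
        rw [((hca.zpow_zpow (-(i' * j)) i).symm).eq]
    _ = c ^ (-(i' * j)) * ((a ^ i * a ^ i') * ((b ^ j * b ^ j') * (c ^ k * c ^ k'))) := by group
    _ = c ^ (-(i' * j)) * (a ^ (i + i') * (b ^ (j + j') * c ^ (k + k'))) := by
        rw [← zpow_add, ← zpow_add, ← zpow_add]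
    _ = (c ^ (-(i' * j)) * a ^ (i + i')) * (b ^ (j + j') * c ^ (k + k')) := by group
    _ = (a ^ (i + i') * c ^ (-(i' * j))) * (b ^ (j + j') * c ^ (k + k')) := by
        rw [(hca.zpow_zpow (-(i' * j)) (i + i')).eq]
    _ = a ^ (i + i') * ((c ^ (-(i' * j)) * b ^ (j + j')) * c ^ (k + k')) := by group
    _ = a ^ (i + i') * ((b ^ (j + j') * c ^ (-(i' * j))) * c ^ (k + k')) := by
        rw [(hcb.zpow_zpow (-(i' * j)) (j + j')).eq]
    _ = a ^ (i + i') * (b ^ (j + j') * (c ^ (-(i' * j)) * c ^ (k + k'))) := by group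
    _ = a ^ (i + i') * b ^ (j + j') * c ^ (k + k' - i' * j) := by
        rw [← zpow_add]; rw [show -(i' * j) + (k + k') = k + k' - i' * j by ring]; group

lemma einv (hab : ⁅a, b⁆ = c) (hca : Commute c a) (hcb : Commute c b) (i j k : ℤ) :
    (a ^ i * b ^ j * c ^ k)⁻¹ = a ^ (-i) * b ^ (-j) * c ^ (-k - i * j) := by
  apply inv_eq_of_mul_eq_one_right
  rw [emul hab hca hcb]
  rw [show i + -i = 0 by ring, show j + -j = 0 by ring,
    show k + (-k - i * j) - -i * j = 0 by ring]
  simp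

lemma epow (hab : ⁅a, b⁆ = c) (hca : Commute c a) (hcb : Commute c b) (i j : ℤ) :
    ∀ m : ℤ, ∃ e : ℤ, (a ^ i * b ^ j * c ^ (0:ℤ)) ^ m = a ^ (m * i) * b ^ (m * j) * c ^ e := by
  intro m
  induction m using Int.induction_on with
  | zero => exact ⟨0, by simp⟩
  | succ m ih =>
    obtain ⟨e, he⟩ := ih
    exact ⟨_, by
      rw [zpow_add, zpow_one, he, emul hab hca hcb,
        show (m : ℤ) * i + i = ((m : ℤ) + 1) * i by ring,
        show (m : ℤ) * j + j = ((m : ℤ) + 1) * j by ring]⟩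
  | pred m ih =>
    obtain ⟨e, he⟩ := ih
    exact ⟨_, by
      rw [show (-(m : ℤ) - 1) = -m + -1 by ring, zpow_add, he, zpow_neg_one,
        einv hab hca hcb, emul hab hca hcb,
        show (-m : ℤ) * i + -i = (-(m : ℤ) + -1) * i by ring,
        show (-m : ℤ) * j + -j = (-(m : ℤ) + -1) * j by ring]⟩

lemma extract (hab : ⁅a, b⁆ = c) (hca : Commute c a) (hcb : Commute c b) (i j k i' j' k' : ℤ) :
    ((a ^ i * b ^ j * c ^ k) * (a ^ i' * b ^ j' * c ^ k')) *
      ((a ^ i' * b ^ j' * c ^ k') * (a ^ i * b ^ j * c ^ k))⁻¹ = c ^ (i * j' - i' * j) := by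
  rw [emul hab hca hcb, emul hab hca hcb, einv hab hca hcb, emul hab hca hcb]
  rw [show i + i' + -(i' + i) = 0 by ring, show j + j' + -(j' + j) = 0 by ring,
    zpow_zero, zpow_zero, one_mul, one_mul]
  congr 1
  ring

end Generic2

namespace Haux
variable (p t s : ℕ)

lemma nf_exists (g : Hgrp p t s) :
    ∃ i j k : ℤ, g = aa p t s ^ i * bb p t s ^ j * cc p t s ^ k := by
  have hab := rel_ab p t s
  have hca := rel_ca p t s
  have hcb := rel_cb p t s
  induction g using PresentedGroup.induction_on with
  | H z =>
    induction z using FreeGroup.induction_on with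
    | C1 => exact ⟨0, 0, 0, by simp⟩
    | of x =>
      fin_cases x
      · exact ⟨1, 0, 0, by simp [aa, PresentedGroup.of]⟩
      · exact ⟨0, 1, 0, by simp [bb, PresentedGroup.of]⟩
      · exact ⟨0, 0, 1, by simp [cc, PresentedGroup.of]⟩
    | inv_of x _ =>
      fin_cases x
      · exact ⟨-1, 0, 0, by simp [aa, PresentedGroup.of]⟩
      · exact ⟨0, -1, 0, by simp [bb, PresentedGroup.of]⟩
      · exact ⟨0, 0, -1, by simp [cc, PresentedGroup.of]⟩
    | mul z w hz hw =>
      obtain ⟨i, j, k, hz⟩ := hz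
      obtain ⟨i', j', k', hw⟩ := hw
      refine ⟨i + i', j + j', k + k' - i' * j, ?_⟩
      rw [map_mul, hz, hw, emul hab hca hcb]

end Haux

section helpers
variable {G : Type*} [Group G]

lemma absmem {K : Subgroup G} {g : G} {n : ℤ} (h : g ^ n ∈ K) :
    g ^ ((n.natAbs : ℕ) : ℤ) ∈ K := by
  rcases Int.natAbs_eq n with he | he
  · rwa [← he]
  · rw [show ((n.natAbs : ℕ) : ℤ) = -n by omega, zpow_neg]
    exact K.inv_mem h

lemma coprime_pow_mem {K : Subgroup G} {g : G} {N q : ℕ} (hq : g ^ q = 1)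
    (hcop : Nat.Coprime q N) (h : g ^ ((N : ℕ) : ℤ) ∈ K) : g ∈ K := by
  obtain ⟨u, v, huv⟩ := Nat.isCoprime_iff_coprime.mpr hcop
  have : g = (g ^ ((q : ℕ) : ℤ)) ^ u * (g ^ ((N : ℕ) : ℤ)) ^ v := by
    rw [← zpow_mul, ← zpow_mul, ← zpow_add,
      show ((q : ℤ) * u + (N : ℤ) * v) = u * q + v * N by ring, huv, zpow_one]
  rw [this, zpow_natCast, hq, one_zpow, one_mul]
  exact K.zpow_mem h v
end helpers

namespace Haux
variable (p t s : ℕ)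

def hf : Fin 3 → Heis3 p := ![Heis3.A, Heis3.B, Heis3.C]

lemma hf_rels (hp : p.Prime) (ht : 1 ≤ t) (hs : 1 ≤ s) :
    ∀ r ∈ HRels p t s, FreeGroup.lift (hf p) r = 1 := by
  have hf0 : hf p 0 = Heis3.A := rfl
  have hf1 : hf p 1 = Heis3.B := rfl
  have hf2 : hf p 2 = Heis3.C := rfl
  have hcast : ∀ u : ℕ, 1 ≤ u → ((p ^ u : ℕ) : ZMod p) = 0 := by
    intro u hu
    rw [Nat.cast_pow, ZMod.natCast_self, zero_pow (by omega)]
  intro r hr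
  simp only [HRels, Set.mem_insert_iff, Set.mem_singleton_iff] at hr
  rcases hr with rfl | rfl | rfl | rfl | rfl | rfl
  · rw [map_pow, FreeGroup.lift_apply_of, hf0, Heis3.A_pow]
    ext <;> simp [hcast t ht]
  · rw [map_pow, FreeGroup.lift_apply_of, hf1, Heis3.B_pow]
    ext <;> simp [hcast s hs]
  · rw [map_pow, FreeGroup.lift_apply_of, hf2, Heis3.C_pow]
    ext <;> simp [hcast 1 le_rfl]
  · rw [map_mul, map_inv, map_commutatorElement, FreeGroup.lift_apply_of, FreeGroup.lift_apply_of,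
      FreeGroup.lift_apply_of, hf0, hf1, hf2, commutatorElement_def]
    ext <;> simp [Heis3.A, Heis3.B, Heis3.C]
  · rw [map_commutatorElement, FreeGroup.lift_apply_of, FreeGroup.lift_apply_of, hf0, hf2,
      commutatorElement_def]
    ext <;> simp [Heis3.A, Heis3.C]
  · rw [map_commutatorElement, FreeGroup.lift_apply_of, FreeGroup.lift_apply_of, hf1, hf2,
      commutatorElement_def]
    ext <;> simp [Heis3.B, Heis3.C]

lemma ncab (hp : p.Prime) (ht : 1 ≤ t) (hs : 1 ≤ s) : ¬ Commute (aa p t s) (bb p t s) := by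
  haveI : Fact p.Prime := ⟨hp⟩
  intro h
  have hφ := h.map (PresentedGroup.toGroup (hf_rels p t s hp ht hs))
  rw [show aa p t s = PresentedGroup.of 0 from rfl, show bb p t s = PresentedGroup.of 1 from rfl,
    PresentedGroup.toGroup.of, PresentedGroup.toGroup.of] at hφ
  have hz := congrArg Heis3.z hφ.eq
  simp [hf, Heis3.A, Heis3.B] at hz

lemma proper_comm (hp : p.Prime) (hs : 1 ≤ s) (hts : s ≤ t) (K : Subgroup (Hgrp p t s))
    (hK : K ≠ ⊤) : ∀ x ∈ K, ∀ y ∈ K, Commute x y := by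
  intro x hxK y hyK
  by_contra hxy
  have hab := rel_ab p t s
  have hca := rel_ca p t s
  have hcb := rel_cb p t s
  obtain ⟨i, j, k, hx⟩ := nf_exists p t s x
  obtain ⟨i', j', k', hy⟩ := nf_exists p t s y
  set A := aa p t s
  set B := bb p t s
  set C := cc p t s
  set n : ℤ := i * j' - i' * j with hn
  have hcn : C ^ n = x * y * (y * x)⁻¹ := by
    rw [hx, hy, extract hab hca hcb]
  have hcnK : C ^ n ∈ K := by
    rw [hcn]
    exact K.mul_mem (K.mul_mem hxK hyK) (K.inv_mem (K.mul_mem hyK hxK))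
  have hcn1 : C ^ n ≠ 1 := by
    intro h1
    apply hxy
    have h2 : x * y * (y * x)⁻¹ = 1 := by rw [← hcn, h1]
    exact commute_iff_eq x y |>.mpr (mul_inv_eq_one.mp h2)
  have hpn : ¬ ((p : ℤ) ∣ n) := by
    rintro ⟨m, hm⟩
    apply hcn1
    rw [hm, zpow_mul, zpow_natCast, rel_c p t s, one_zpow]
  set N : ℕ := n.natAbs with hNdef
  have hpN : ¬ (p ∣ N) := by
    intro hd
    exact hpn ((Int.natCast_dvd_natCast.mpr hd).trans (Int.natAbs_dvd.mpr dvd_rfl))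
  have hcopP : Nat.Coprime p N := (Nat.Prime.coprime_iff_not_dvd hp).mpr hpN
  have hcK : C ∈ K := coprime_pow_mem (rel_c p t s) hcopP (absmem hcnK)
  have hxK' : A ^ i * B ^ j ∈ K := by
    have h3 : A ^ i * B ^ j = x * (C ^ k)⁻¹ := by rw [hx]; group
    rw [h3]
    exact K.mul_mem hxK (K.inv_mem (K.zpow_mem hcK k))
  have hyK' : A ^ i' * B ^ j' ∈ K := by
    have h3 : A ^ i' * B ^ j' = y * (C ^ k')⁻¹ := by rw [hy]; group
    rw [h3]
    exact K.mul_mem hyK (K.inv_mem (K.zpow_mem hcK k'))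
  have hx0 : A ^ i * B ^ j * C ^ (0 : ℤ) = A ^ i * B ^ j := by rw [zpow_zero, mul_one]
  have hy0 : A ^ i' * B ^ j' * C ^ (0 : ℤ) = A ^ i' * B ^ j' := by rw [zpow_zero, mul_one]
  -- a ^ n ∈ K
  obtain ⟨e1, he1⟩ := epow hab hca hcb i j j'
  obtain ⟨e2, he2⟩ := epow hab hca hcb i' j' j
  have m1 : (A ^ i * B ^ j * C ^ (0 : ℤ)) ^ j' ∈ K := by rw [hx0]; exact K.zpow_mem hxK' j'
  have m2 : (A ^ i' * B ^ j' * C ^ (0 : ℤ)) ^ j ∈ K := by rw [hy0]; exact K.zpow_mem hyK' j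
  have hprod1 : ∃ E : ℤ, (A ^ i * B ^ j * C ^ (0 : ℤ)) ^ j' *
      ((A ^ i' * B ^ j' * C ^ (0 : ℤ)) ^ j)⁻¹ = A ^ n * B ^ (0 : ℤ) * C ^ E := by
    exact ⟨_, by
      rw [he1, he2, einv hab hca hcb, emul hab hca hcb,
        show j' * i + -(j * i') = n by rw [hn]; ring,
        show j' * j + -(j * j') = (0 : ℤ) by ring]⟩
  obtain ⟨E1, hE1⟩ := hprod1
  have haNK : A ^ n ∈ K := by
    have h4 : A ^ n * B ^ (0 : ℤ) * C ^ E1 ∈ K := hE1 ▸ K.mul_mem m1 (K.inv_mem m2)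
    have h5 : A ^ n = (A ^ n * B ^ (0 : ℤ) * C ^ E1) * (C ^ E1)⁻¹ := by
      rw [zpow_zero, mul_one]; group
    rw [h5]
    exact K.mul_mem h4 (K.inv_mem (K.zpow_mem hcK E1))
  have haK : A ∈ K :=
    coprime_pow_mem (rel_a p t s) (hcopP.pow_left t) (absmem haNK)
  -- b ^ n ∈ K
  obtain ⟨e3, he3⟩ := epow hab hca hcb i j i'
  obtain ⟨e4, he4⟩ := epow hab hca hcb i' j' i
  have m3 : (A ^ i * B ^ j * C ^ (0 : ℤ)) ^ i' ∈ K := by rw [hx0]; exact K.zpow_mem hxK' i'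
  have m4 : (A ^ i' * B ^ j' * C ^ (0 : ℤ)) ^ i ∈ K := by rw [hy0]; exact K.zpow_mem hyK' i
  have hprod2 : ∃ E : ℤ, ((A ^ i * B ^ j * C ^ (0 : ℤ)) ^ i')⁻¹ *
      ((A ^ i' * B ^ j' * C ^ (0 : ℤ)) ^ i) = A ^ (0 : ℤ) * B ^ n * C ^ E := by
    exact ⟨_, by
      rw [he3, he4, einv hab hca hcb, emul hab hca hcb,
        show -(i' * i) + i * i' = (0 : ℤ) by ring,
        show -(i' * j) + i * j' = n by rw [hn]; ring]⟩
  obtain ⟨E2, hE2⟩ := hprod2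
  have hbNK : B ^ n ∈ K := by
    have h4 : A ^ (0 : ℤ) * B ^ n * C ^ E2 ∈ K := hE2 ▸ K.mul_mem (K.inv_mem m3) m4
    have h5 : B ^ n = (A ^ (0 : ℤ) * B ^ n * C ^ E2) * (C ^ E2)⁻¹ := by
      rw [zpow_zero, one_mul]; group
    rw [h5]
    exact K.mul_mem h4 (K.inv_mem (K.zpow_mem hcK E2))
  have hbK : B ∈ K :=
    coprime_pow_mem (rel_b p t s) (hcopP.pow_left s) (absmem hbNK)
  apply hK
  rw [Subgroup.eq_top_iff']
  intro g
  refine PresentedGroup.generated_by _ K ?_ g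
  intro j0
  fin_cases j0
  · exact haK
  · exact hbK
  · exact hcK

end Haux

theorem stmt7 (p t s : ℕ) (hp : p.Prime) (hodd : Odd p) (hs : 1 ≤ s) (hts : s ≤ t) :
    (∀ M : Subgroup (Hgrp p t s), IsCoatom M → ∀ x ∈ M, ∀ y ∈ M, Commute x y) ∧
    (∃ x y : Hgrp p t s, ¬ Commute x y) ∧
    (∀ K : Subgroup (Hgrp p t s), K ≠ ⊤ → ∀ x ∈ K, ∀ y ∈ K, Commute x y) := by
  have main := Haux.proper_comm p t s hp hs hts
  exact ⟨fun M hM => main M hM.1,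
    ⟨aa p t s, bb p t s, Haux.ncab p t s hp (le_trans hs hts) hs⟩,
    main⟩
end

section
/- The Frattini subgroup of H_{p,t,s} equals ⟨a^p, b^p, c⟩ and is contained in the center of H_{p,t,s}. -/
open scoped commutatorElement

namespace Stmt8Aux

section general

variable {G : Type*} [Group G]

lemma central_conj {z : G} (hz : ∀ y, z * y = y * z) (m x : G) :
    (m * z) * x * (m * z)⁻¹ = m * x * m⁻¹ := by
  have h : z * x * z⁻¹ = x := by rw [hz x, mul_inv_cancel_right]
  calc (m * z) * x * (m * z)⁻¹ = m * (z * x * z⁻¹) * m⁻¹ := by group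
    _ = m * x * m⁻¹ := by rw [h]

lemma commutator_central (m n z w : G) (hz : ∀ y, z * y = y * z)
    (hw : ∀ y, w * y = y * w) : ⁅m * z, n * w⁆ = ⁅m, n⁆ := by
  have h1 : (m * z) * (n * w) * (m * z)⁻¹ = m * (n * w) * m⁻¹ := central_conj hz m (n * w)
  have h2 : w * m⁻¹ * w⁻¹ = m⁻¹ := by rw [hw m⁻¹, mul_inv_cancel_right]
  calc ⁅m * z, n * w⁆ = (m * z) * (n * w) * (m * z)⁻¹ * (n * w)⁻¹ := commutatorElement_def _ _
    _ = m * (n * w) * m⁻¹ * (n * w)⁻¹ := by rw [h1]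
    _ = m * n * (w * m⁻¹ * w⁻¹) * n⁻¹ := by group
    _ = m * n * m⁻¹ * n⁻¹ := by rw [h2]
    _ = ⁅m, n⁆ := (commutatorElement_def _ _).symm

lemma mem_sup_zpowers_central {M : Subgroup G} {x : G} (hx : ∀ y, x * y = y * x)
    {g : G} (hg : g ∈ M ⊔ Subgroup.zpowers x) : ∃ m ∈ M, ∃ k : ℤ, g = m * x ^ k := by
  have hxk : ∀ (k : ℤ) (y : G), x ^ k * y = y * x ^ k := fun k y =>
    ((show Commute x y from hx y).zpow_left k).eq
  have hsup : M ⊔ Subgroup.zpowers x = Subgroup.closure (↑M ∪ {x}) := by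
    rw [Subgroup.closure_union, Subgroup.closure_eq, Subgroup.zpowers_eq_closure]
  rw [hsup] at hg
  refine Subgroup.closure_induction ?_ ?_ ?_ ?_ hg
  · rintro y (hy | rfl)
    · exact ⟨y, hy, 0, by simp⟩
    · exact ⟨1, M.one_mem, 1, by simp⟩
  · exact ⟨1, M.one_mem, 0, by simp⟩
  · rintro g1 g2 _ _ ⟨m1, hm1, k1, rfl⟩ ⟨m2, hm2, k2, rfl⟩
    refine ⟨m1 * m2, M.mul_mem hm1 hm2, k1 + k2, ?_⟩
    calc m1 * x ^ k1 * (m2 * x ^ k2) = m1 * (x ^ k1 * m2) * x ^ k2 := by group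
      _ = m1 * (m2 * x ^ k1) * x ^ k2 := by rw [hxk]
      _ = m1 * m2 * x ^ (k1 + k2) := by rw [zpow_add]; group
  · rintro g1 _ ⟨m1, hm1, k1, rfl⟩
    refine ⟨m1⁻¹, M.inv_mem hm1, -k1, ?_⟩
    calc (m1 * x ^ k1)⁻¹ = x ^ (-k1) * m1⁻¹ := by rw [mul_inv_rev, zpow_neg]
      _ = m1⁻¹ * x ^ (-k1) := by rw [hxk]

lemma ker_isCoatom {p : ℕ} (hp : p.Prime) (φ : G →* Multiplicative (ZMod p))
    (hne : ∃ g, φ g ≠ 1) : IsCoatom (φ.ker) := by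
  haveI : Fact p.Prime := ⟨hp⟩
  constructor
  · intro h
    obtain ⟨g, hg⟩ := hne
    exact hg (h.ge (Subgroup.mem_top g))
  · intro K hK
    obtain ⟨k, hkK, hkker⟩ := SetLike.exists_of_lt hK
    have hker_le : φ.ker ≤ K := hK.le
    have hx : Multiplicative.toAdd (φ k) ≠ 0 := by
      intro h0
      apply hkker
      rw [MonoidHom.mem_ker]
      have := congrArg Multiplicative.ofAdd h0
      simpa using this
    rw [Subgroup.eq_top_iff']
    intro g
    set x : ZMod p := Multiplicative.toAdd (φ k) with hxdef
    set y : ZMod p := Multiplicative.toAdd (φ g) with hydef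
    set n : ℕ := (y * x⁻¹).val with hndef
    have hcast : ((n : ZMod p)) = y * x⁻¹ := by
      rw [hndef, ZMod.natCast_val, ZMod.cast_id]
    have h1 : φ (k ^ n) = φ g := by
      apply Multiplicative.toAdd.injective
      rw [map_pow, toAdd_pow, ← hxdef, ← hydef, nsmul_eq_mul, hcast,
        mul_assoc, inv_mul_cancel₀ hx, mul_one]
    have hmem : g * (k ^ n)⁻¹ ∈ φ.ker := by
      rw [MonoidHom.mem_ker, map_mul, map_inv, h1, mul_inv_cancel]
    have : g = (g * (k ^ n)⁻¹) * k ^ n := by group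
    rw [this]
    exact K.mul_mem (hker_le hmem) (K.pow_mem hkK n)

end general

section rels

variable (p t s : ℕ)

lemma mk_rel_one {r : FreeGroup (Fin 3)} (hr : r ∈ HRels p t s) :
    PresentedGroup.mk (HRels p t s) r = 1 :=
  (QuotientGroup.eq_one_iff r).mpr (Subgroup.subset_normalClosure hr)

lemma rel_a : aa p t s ^ p ^ t = 1 := by
  have h := mk_rel_one p t s (r := FreeGroup.of (0 : Fin 3) ^ p ^ t) (by simp [HRels])
  rw [map_pow] at h
  exact h

lemma rel_b : bb p t s ^ p ^ s = 1 := by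
  have h := mk_rel_one p t s (r := FreeGroup.of (1 : Fin 3) ^ p ^ s) (by simp [HRels])
  rw [map_pow] at h
  exact h

lemma rel_c : cc p t s ^ p = 1 := by
  have h := mk_rel_one p t s (r := FreeGroup.of (2 : Fin 3) ^ p) (by simp [HRels])
  rw [map_pow] at h
  exact h

lemma rel_ab : ⁅aa p t s, bb p t s⁆ = cc p t s := by
  have h := mk_rel_one p t s
    (r := ⁅FreeGroup.of (0 : Fin 3), FreeGroup.of (1 : Fin 3)⁆ * (FreeGroup.of (2 : Fin 3))⁻¹)
    (by simp [HRels])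
  rw [map_mul, map_inv, map_commutatorElement] at h
  exact mul_inv_eq_one.mp h

lemma rel_ca : cc p t s * aa p t s = aa p t s * cc p t s := by
  have h := mk_rel_one p t s (r := ⁅FreeGroup.of (2 : Fin 3), FreeGroup.of (0 : Fin 3)⁆)
    (by simp [HRels])
  rw [map_commutatorElement] at h
  exact (commutatorElement_eq_one_iff_commute.mp h).eq

lemma rel_cb : cc p t s * bb p t s = bb p t s * cc p t s := by
  have h := mk_rel_one p t s (r := ⁅FreeGroup.of (2 : Fin 3), FreeGroup.of (1 : Fin 3)⁆)
    (by simp [HRels])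
  rw [map_commutatorElement] at h
  exact (commutatorElement_eq_one_iff_commute.mp h).eq

lemma cc_central : ∀ y : Hgrp p t s, cc p t s * y = y * cc p t s := by
  intro y
  have hy : y ∈ Subgroup.centralizer {cc p t s} := by
    refine PresentedGroup.generated_by _ _ ?_ y
    intro j
    rw [Subgroup.mem_centralizer_iff]
    rintro g hg
    rw [Set.mem_singleton_iff] at hg
    subst hg
    fin_cases j
    · exact rel_ca p t s
    · exact rel_cb p t s
    · rfl
  exact Subgroup.mem_centralizer_iff.mp hy _ (Set.mem_singleton _)

end rels

section comm

variable (p t s : ℕ)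

/-- `cc^k` is central. -/
lemma ccz_central (k : ℤ) : ∀ y : Hgrp p t s, cc p t s ^ k * y = y * cc p t s ^ k :=
  fun y => ((show Commute (cc p t s) y from cc_central p t s y).zpow_left k).eq

lemma ccz_move (k : ℤ) (u v : Hgrp p t s) :
    u * (cc p t s ^ k * v) = cc p t s ^ k * (u * v) := by
  rw [← mul_assoc, ← ccz_central p t s k u, mul_assoc]

lemma ab_eq : aa p t s * bb p t s = cc p t s * bb p t s * aa p t s := by
  have h := rel_ab p t s
  rw [commutatorElement_def] at h
  rw [← h]; group

lemma ba_eq : bb p t s * aa p t s * (bb p t s)⁻¹ = (cc p t s)⁻¹ * aa p t s := by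
  have h := rel_ab p t s
  rw [commutatorElement_def] at h
  rw [← h]; group

lemma binv_a : (bb p t s)⁻¹ * aa p t s * bb p t s = cc p t s * aa p t s := by
  calc (bb p t s)⁻¹ * aa p t s * bb p t s = (bb p t s)⁻¹ * (aa p t s * bb p t s) := by group
    _ = (bb p t s)⁻¹ * (cc p t s * (bb p t s * aa p t s)) := by rw [ab_eq]; group
    _ = cc p t s * ((bb p t s)⁻¹ * (bb p t s * aa p t s)) := by
        rw [← zpow_one (cc p t s), ccz_move]
    _ = cc p t s * aa p t s := by group

lemma b_conj_a (j : ℤ) :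
    bb p t s ^ j * aa p t s * bb p t s ^ (-j) = cc p t s ^ (-j) * aa p t s := by
  induction j using Int.induction_on with
  | zero => simp
  | succ j ih =>
    have step : bb p t s ^ ((j : ℤ) + 1) * aa p t s * bb p t s ^ (-((j : ℤ) + 1))
        = bb p t s * (bb p t s ^ (j : ℤ) * aa p t s * bb p t s ^ (-(j : ℤ))) * (bb p t s)⁻¹ := by
      group
    rw [step, ih]
    calc bb p t s * (cc p t s ^ (-(j : ℤ)) * aa p t s) * (bb p t s)⁻¹
        = cc p t s ^ (-(j : ℤ)) * (bb p t s * aa p t s * (bb p t s)⁻¹) := by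
          rw [ccz_move]; group
      _ = cc p t s ^ (-(j : ℤ)) * ((cc p t s)⁻¹ * aa p t s) := by rw [ba_eq]
      _ = cc p t s ^ (-((j : ℤ) + 1)) * aa p t s := by group
  | pred j ih =>
    have step : bb p t s ^ (-(j : ℤ) - 1) * aa p t s * bb p t s ^ (-(-(j : ℤ) - 1))
        = (bb p t s)⁻¹ * (bb p t s ^ (-(j : ℤ)) * aa p t s * bb p t s ^ (-(-(j : ℤ)))) * bb p t s := by
      group
    rw [step, ih]
    calc (bb p t s)⁻¹ * (cc p t s ^ (- -(j : ℤ)) * aa p t s) * bb p t s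
        = cc p t s ^ (- -(j : ℤ)) * ((bb p t s)⁻¹ * aa p t s * bb p t s) := by
          rw [ccz_move]; group
      _ = cc p t s ^ (- -(j : ℤ)) * (cc p t s * aa p t s) := by rw [binv_a]
      _ = cc p t s ^ (-(-(j : ℤ) - 1)) * aa p t s := by group

lemma swap (j k : ℤ) :
    bb p t s ^ j * aa p t s ^ k = cc p t s ^ (-(j * k)) * (aa p t s ^ k * bb p t s ^ j) := by
  have hconj : bb p t s ^ j * aa p t s ^ k * bb p t s ^ (-j)
      = cc p t s ^ (-(j * k)) * aa p t s ^ k := by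
    have h1 : (MulAut.conj (bb p t s ^ j)) (aa p t s) = cc p t s ^ (-j) * aa p t s := by
      rw [MulAut.conj_apply, ← zpow_neg]
      exact b_conj_a p t s j
    have h2 : (MulAut.conj (bb p t s ^ j)) (aa p t s ^ k)
        = (cc p t s ^ (-j) * aa p t s) ^ k := by rw [map_zpow, h1]
    rw [MulAut.conj_apply, ← zpow_neg] at h2
    rw [h2, (show Commute (cc p t s ^ (-j)) (aa p t s) from
      (show Commute (cc p t s) (aa p t s) from rel_ca p t s).zpow_left (-j)).mul_zpow,
      ← zpow_mul]
    congr 2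
    ring
  calc bb p t s ^ j * aa p t s ^ k
      = (bb p t s ^ j * aa p t s ^ k * bb p t s ^ (-j)) * bb p t s ^ j := by group
    _ = (cc p t s ^ (-(j * k)) * aa p t s ^ k) * bb p t s ^ j := by rw [hconj]
    _ = cc p t s ^ (-(j * k)) * (aa p t s ^ k * bb p t s ^ j) := by group

lemma ap_central : ∀ y : Hgrp p t s, aa p t s ^ p * y = y * aa p t s ^ p := by
  intro y
  have key : aa p t s ^ p * bb p t s = bb p t s * aa p t s ^ p := by
    have h := swap p t s 1 (p : ℤ)
    rw [zpow_one, one_mul] at h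
    have hcp : cc p t s ^ (-(p : ℤ)) = 1 := by
      rw [zpow_neg, zpow_natCast, rel_c, inv_one]
    rw [hcp, one_mul, zpow_natCast] at h
    exact h.symm
  have hy : y ∈ Subgroup.centralizer {aa p t s ^ p} := by
    refine PresentedGroup.generated_by _ _ ?_ y
    intro j
    rw [Subgroup.mem_centralizer_iff]
    rintro g hg
    rw [Set.mem_singleton_iff] at hg
    subst hg
    fin_cases j
    · exact ((Commute.refl (aa p t s)).pow_left p).eq
    · exact key
    · exact (((show Commute (cc p t s) (aa p t s) from rel_ca p t s).pow_right p).eq).symm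
  exact Subgroup.mem_centralizer_iff.mp hy _ (Set.mem_singleton _)

lemma bp_central : ∀ y : Hgrp p t s, bb p t s ^ p * y = y * bb p t s ^ p := by
  intro y
  have key : bb p t s ^ p * aa p t s = aa p t s * bb p t s ^ p := by
    have h := swap p t s (p : ℤ) 1
    rw [zpow_one, mul_one] at h
    have hcp : cc p t s ^ (-(p : ℤ)) = 1 := by
      rw [zpow_neg, zpow_natCast, rel_c, inv_one]
    rw [hcp, one_mul, zpow_natCast] at h
    exact h
  have hy : y ∈ Subgroup.centralizer {bb p t s ^ p} := by
    refine PresentedGroup.generated_by _ _ ?_ y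
    intro j
    rw [Subgroup.mem_centralizer_iff]
    rintro g hg
    rw [Set.mem_singleton_iff] at hg
    subst hg
    fin_cases j
    · exact key
    · exact ((Commute.refl (bb p t s)).pow_left p).eq
    · exact (((show Commute (cc p t s) (bb p t s) from rel_cb p t s).pow_right p).eq).symm
  exact Subgroup.mem_centralizer_iff.mp hy _ (Set.mem_singleton _)

end comm

section decomp

variable (p t s : ℕ)

/-- The candidate Frattini subgroup. -/
def Nsub : Subgroup (Hgrp p t s) :=
  Subgroup.closure {aa p t s ^ p, bb p t s ^ p, cc p t s}

lemma cc_mem_Nsub : cc p t s ∈ Nsub p t s :=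
  Subgroup.subset_closure (by simp)

lemma ap_mem_Nsub : aa p t s ^ p ∈ Nsub p t s :=
  Subgroup.subset_closure (by simp)

lemma bp_mem_Nsub : bb p t s ^ p ∈ Nsub p t s :=
  Subgroup.subset_closure (by simp)

lemma Nsub_le_center : Nsub p t s ≤ Subgroup.center (Hgrp p t s) := by
  rw [Nsub, Subgroup.closure_le]
  rintro g (rfl | rfl | rfl)
  · exact Subgroup.mem_center_iff.mpr (fun y => (ap_central p t s y).symm)
  · exact Subgroup.mem_center_iff.mpr (fun y => (bp_central p t s y).symm)
  · exact Subgroup.mem_center_iff.mpr (fun y => (cc_central p t s y).symm)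

lemma Nsub_central {g : Hgrp p t s} (hg : g ∈ Nsub p t s) :
    ∀ y : Hgrp p t s, g * y = y * g :=
  fun y => ((Subgroup.mem_center_iff.mp (Nsub_le_center p t s hg)) y).symm

/-- Every element decomposes as `a^i * b^j * n` with `n ∈ N`. -/
lemma decomp (g : Hgrp p t s) :
    ∃ (i j : ℤ) (n : Hgrp p t s), n ∈ Nsub p t s ∧ g = aa p t s ^ i * bb p t s ^ j * n := by
  set A := aa p t s
  set B := bb p t s
  set C := cc p t s
  let K : Subgroup (Hgrp p t s) :=
    { carrier := {g | ∃ (i j : ℤ) (n : Hgrp p t s), n ∈ Nsub p t s ∧ g = A ^ i * B ^ j * n}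
      one_mem' := ⟨0, 0, 1, (Nsub p t s).one_mem, by simp⟩
      mul_mem' := by
        rintro g1 g2 ⟨i, j, n, hn, rfl⟩ ⟨k, l, m, hm, rfl⟩
        refine ⟨i + k, j + l, C ^ (-(j * k)) * (n * m),
          (Nsub p t s).mul_mem ((Nsub p t s).zpow_mem (cc_mem_Nsub p t s) _)
            ((Nsub p t s).mul_mem hn hm), ?_⟩
        have hstep1 : A ^ i * B ^ j * n * (A ^ k * B ^ l * m)
            = A ^ i * B ^ j * (A ^ k * B ^ l) * (n * m) := by
          calc A ^ i * B ^ j * n * (A ^ k * B ^ l * m)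
              = A ^ i * B ^ j * (n * (A ^ k * B ^ l)) * m := by group
            _ = A ^ i * B ^ j * ((A ^ k * B ^ l) * n) * m := by rw [Nsub_central p t s hn]
            _ = A ^ i * B ^ j * (A ^ k * B ^ l) * (n * m) := by group
        have hstep2 : A ^ i * B ^ j * (A ^ k * B ^ l)
            = C ^ (-(j * k)) * (A ^ (i + k) * B ^ (j + l)) := by
          calc A ^ i * B ^ j * (A ^ k * B ^ l)
              = A ^ i * (B ^ j * A ^ k) * B ^ l := by group
            _ = A ^ i * (C ^ (-(j * k)) * (A ^ k * B ^ j)) * B ^ l := by rw [swap]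
            _ = C ^ (-(j * k)) * (A ^ i * (A ^ k * B ^ j)) * B ^ l := by
                rw [ccz_move p t s (-(j * k)) (A ^ i)]
            _ = C ^ (-(j * k)) * (A ^ (i + k) * B ^ (j + l)) := by group
        rw [hstep1, hstep2]
        calc C ^ (-(j * k)) * (A ^ (i + k) * B ^ (j + l)) * (n * m)
            = (A ^ (i + k) * B ^ (j + l)) * C ^ (-(j * k)) * (n * m) := by
              rw [ccz_central p t s (-(j * k))]
          _ = A ^ (i + k) * B ^ (j + l) * (C ^ (-(j * k)) * (n * m)) := by group
      inv_mem' := by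
        rintro g1 ⟨i, j, n, hn, rfl⟩
        refine ⟨-i, -j, C ^ (-(-j * -i)) * n⁻¹,
          (Nsub p t s).mul_mem ((Nsub p t s).zpow_mem (cc_mem_Nsub p t s) _)
            ((Nsub p t s).inv_mem hn), ?_⟩
        calc (A ^ i * B ^ j * n)⁻¹
            = n⁻¹ * (B ^ (-j) * A ^ (-i)) := by group
          _ = n⁻¹ * (C ^ (-(-j * -i)) * (A ^ (-i) * B ^ (-j))) := by rw [swap]
          _ = C ^ (-(-j * -i)) * (n⁻¹ * (A ^ (-i) * B ^ (-j))) := by rw [ccz_move]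
          _ = C ^ (-(-j * -i)) * ((A ^ (-i) * B ^ (-j)) * n⁻¹) := by
              rw [Nsub_central p t s ((Nsub p t s).inv_mem hn)]
          _ = A ^ (-i) * B ^ (-j) * (C ^ (-(-j * -i)) * n⁻¹) := (ccz_move p t s _ _ _).symm }
  have hg : g ∈ K := by
    refine PresentedGroup.generated_by _ _ ?_ g
    intro j
    fin_cases j
    · exact ⟨1, 0, 1, (Nsub p t s).one_mem, by simp; rfl⟩
    · exact ⟨0, 1, 1, (Nsub p t s).one_mem, by simp; rfl⟩
    · exact ⟨0, 0, C, cc_mem_Nsub p t s, by simp; rfl⟩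
  exact hg

end decomp

section homs

variable (p t s : ℕ)

def fvec1 : Fin 3 → Multiplicative (ZMod p) := ![Multiplicative.ofAdd 1, 1, 1]

def fvec2 : Fin 3 → Multiplicative (ZMod p) := ![1, Multiplicative.ofAdd 1, 1]

lemma ofAdd_one_pow (n : ℕ) :
    (Multiplicative.ofAdd (1 : ZMod p)) ^ n = Multiplicative.ofAdd ((n : ZMod p)) := by
  rw [← ofAdd_nsmul, nsmul_eq_mul, mul_one]

lemma pow_cast_zero (ht : 1 ≤ t) : ((p ^ t : ℕ) : ZMod p) = 0 := by
  push_cast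
  rw [ZMod.natCast_self, zero_pow (by omega)]

lemma hf1 (ht : 1 ≤ t) : ∀ r ∈ HRels p t s, FreeGroup.lift (fvec1 p) r = 1 := by
  intro r hr
  simp only [HRels, Set.mem_insert_iff, Set.mem_singleton_iff] at hr
  rcases hr with rfl | rfl | rfl | rfl | rfl | rfl
  · rw [map_pow, FreeGroup.lift_apply_of, show fvec1 p 0 = Multiplicative.ofAdd (1 : ZMod p) from rfl,
      ofAdd_one_pow, pow_cast_zero p t ht]
    rfl
  · rw [map_pow, FreeGroup.lift_apply_of, show fvec1 p 1 = 1 from rfl, one_pow]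
  · rw [map_pow, FreeGroup.lift_apply_of, show fvec1 p 2 = 1 from rfl, one_pow]
  · rw [map_mul, map_inv, map_commutatorElement,
      commutatorElement_eq_one_iff_commute.mpr (Commute.all _ _), FreeGroup.lift_apply_of,
      show fvec1 p 2 = 1 from rfl]
    simp
  · rw [map_commutatorElement]
    exact commutatorElement_eq_one_iff_commute.mpr (Commute.all _ _)
  · rw [map_commutatorElement]
    exact commutatorElement_eq_one_iff_commute.mpr (Commute.all _ _)

lemma hf2 (hs : 1 ≤ s) : ∀ r ∈ HRels p t s, FreeGroup.lift (fvec2 p) r = 1 := by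
  intro r hr
  simp only [HRels, Set.mem_insert_iff, Set.mem_singleton_iff] at hr
  rcases hr with rfl | rfl | rfl | rfl | rfl | rfl
  · rw [map_pow, FreeGroup.lift_apply_of, show fvec2 p 0 = 1 from rfl, one_pow]
  · rw [map_pow, FreeGroup.lift_apply_of, show fvec2 p 1 = Multiplicative.ofAdd (1 : ZMod p) from rfl,
      ofAdd_one_pow, pow_cast_zero p s hs]
    rfl
  · rw [map_pow, FreeGroup.lift_apply_of, show fvec2 p 2 = 1 from rfl, one_pow]
  · rw [map_mul, map_inv, map_commutatorElement,
      commutatorElement_eq_one_iff_commute.mpr (Commute.all _ _), FreeGroup.lift_apply_of,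
      show fvec2 p 2 = 1 from rfl]
    simp
  · rw [map_commutatorElement]
    exact commutatorElement_eq_one_iff_commute.mpr (Commute.all _ _)
  · rw [map_commutatorElement]
    exact commutatorElement_eq_one_iff_commute.mpr (Commute.all _ _)

def phi1 (ht : 1 ≤ t) : Hgrp p t s →* Multiplicative (ZMod p) :=
  PresentedGroup.toGroup (hf1 p t s ht)

def phi2 (hs : 1 ≤ s) : Hgrp p t s →* Multiplicative (ZMod p) :=
  PresentedGroup.toGroup (hf2 p t s hs)

lemma phi1_a (ht : 1 ≤ t) : phi1 p t s ht (aa p t s) = Multiplicative.ofAdd 1 :=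
  PresentedGroup.toGroup.of _

lemma phi1_b (ht : 1 ≤ t) : phi1 p t s ht (bb p t s) = 1 :=
  PresentedGroup.toGroup.of _

lemma phi1_c (ht : 1 ≤ t) : phi1 p t s ht (cc p t s) = 1 :=
  PresentedGroup.toGroup.of _

lemma phi2_a (hs : 1 ≤ s) : phi2 p t s hs (aa p t s) = 1 :=
  PresentedGroup.toGroup.of _

lemma phi2_b (hs : 1 ≤ s) : phi2 p t s hs (bb p t s) = Multiplicative.ofAdd 1 :=
  PresentedGroup.toGroup.of _

lemma phi2_c (hs : 1 ≤ s) : phi2 p t s hs (cc p t s) = 1 :=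
  PresentedGroup.toGroup.of _

lemma Nsub_le_ker_phi1 (ht : 1 ≤ t) : Nsub p t s ≤ (phi1 p t s ht).ker := by
  rw [Nsub, Subgroup.closure_le]
  rintro g (rfl | rfl | rfl) <;> rw [SetLike.mem_coe, MonoidHom.mem_ker]
  · rw [map_pow, phi1_a, ofAdd_one_pow, ZMod.natCast_self]
    rfl
  · rw [map_pow, phi1_b, one_pow]
  · exact phi1_c p t s ht

lemma Nsub_le_ker_phi2 (hs : 1 ≤ s) : Nsub p t s ≤ (phi2 p t s hs).ker := by
  rw [Nsub, Subgroup.closure_le]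
  rintro g (rfl | rfl | rfl) <;> rw [SetLike.mem_coe, MonoidHom.mem_ker]
  · rw [map_pow, phi2_a, one_pow]
  · rw [map_pow, phi2_b, ofAdd_one_pow, ZMod.natCast_self]
    rfl
  · exact phi2_c p t s hs

lemma ofAdd_one_ne_one (hp : p.Prime) : (Multiplicative.ofAdd (1 : ZMod p)) ≠ 1 := by
  haveI : Fact (1 < p) := ⟨hp.one_lt⟩
  intro h
  exact one_ne_zero (α := ZMod p) (by simpa using congrArg Multiplicative.toAdd h)

lemma coatom_ker_phi1 (hp : p.Prime) (ht : 1 ≤ t) : IsCoatom (phi1 p t s ht).ker :=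
  ker_isCoatom hp _ ⟨aa p t s, by rw [phi1_a]; exact ofAdd_one_ne_one p hp⟩

lemma coatom_ker_phi2 (hp : p.Prime) (hs : 1 ≤ s) : IsCoatom (phi2 p t s hs).ker :=
  ker_isCoatom hp _ ⟨bb p t s, by rw [phi2_b]; exact ofAdd_one_ne_one p hp⟩

lemma frattini_le_Nsub (hp : p.Prime) (hs : 1 ≤ s) (hts : s ≤ t) :
    frattini (Hgrp p t s) ≤ Nsub p t s := by
  have ht : 1 ≤ t := hs.trans hts
  intro g hg
  have h1 : phi1 p t s ht g = 1 := frattini_le_coatom (coatom_ker_phi1 p t s hp ht) hg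
  have h2 : phi2 p t s hs g = 1 := frattini_le_coatom (coatom_ker_phi2 p t s hp hs) hg
  obtain ⟨i, j, n, hn, rfl⟩ := decomp p t s g
  have hn1 : phi1 p t s ht n = 1 := Nsub_le_ker_phi1 p t s ht hn
  have hn2 : phi2 p t s hs n = 1 := Nsub_le_ker_phi2 p t s hs hn
  rw [map_mul, map_mul, map_zpow, map_zpow, phi1_a, phi1_b, one_zpow, mul_one, hn1, mul_one] at h1
  rw [map_mul, map_mul, map_zpow, map_zpow, phi2_a, phi2_b, one_zpow, one_mul, hn2, mul_one] at h2
  have hi : ((i : ZMod p)) = 0 := by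
    have := congrArg Multiplicative.toAdd h1
    rw [toAdd_zpow] at this
    simpa [zsmul_eq_mul] using this
  have hj : ((j : ZMod p)) = 0 := by
    have := congrArg Multiplicative.toAdd h2
    rw [toAdd_zpow] at this
    simpa [zsmul_eq_mul] using this
  obtain ⟨q, rfl⟩ := (ZMod.intCast_zmod_eq_zero_iff_dvd i p).mp hi
  obtain ⟨r, rfl⟩ := (ZMod.intCast_zmod_eq_zero_iff_dvd j p).mp hj
  refine (Nsub p t s).mul_mem ((Nsub p t s).mul_mem ?_ ?_) hn
  · rw [zpow_mul, zpow_natCast]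
    exact (Nsub p t s).zpow_mem (ap_mem_Nsub p t s) q
  · rw [zpow_mul, zpow_natCast]
    exact (Nsub p t s).zpow_mem (bp_mem_Nsub p t s) r

end homs

section coatoms

variable (p t s : ℕ)

lemma cc_mem_coatom {M : Subgroup (Hgrp p t s)} (hM : IsCoatom M) : cc p t s ∈ M := by
  by_contra hc
  have hlt : M < M ⊔ Subgroup.zpowers (cc p t s) := by
    refine lt_of_le_of_ne le_sup_left (fun h => hc ?_)
    have : cc p t s ∈ M ⊔ Subgroup.zpowers (cc p t s) :=
      (le_sup_right : Subgroup.zpowers (cc p t s) ≤ _) (Subgroup.mem_zpowers _)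
    rwa [← h] at this
  have htop := hM.2 _ hlt
  have hamem : aa p t s ∈ M ⊔ Subgroup.zpowers (cc p t s) := by rw [htop]; trivial
  have hbmem : bb p t s ∈ M ⊔ Subgroup.zpowers (cc p t s) := by rw [htop]; trivial
  obtain ⟨m1, hm1, k, hk⟩ := mem_sup_zpowers_central (cc_central p t s) hamem
  obtain ⟨m2, hm2, l, hl⟩ := mem_sup_zpowers_central (cc_central p t s) hbmem
  have hcc : cc p t s = ⁅m1, m2⁆ := by
    rw [← rel_ab p t s, hk, hl,
      commutator_central m1 m2 _ _ (ccz_central p t s k) (ccz_central p t s l)]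
  apply hc
  rw [hcc, commutatorElement_def]
  exact M.mul_mem (M.mul_mem (M.mul_mem hm1 hm2) (M.inv_mem hm1)) (M.inv_mem hm2)

lemma gen_pow_mem_coatom {M : Subgroup (Hgrp p t s)} (hM : IsCoatom M)
    {x : Hgrp p t s} {e : ℕ} (hx_central : ∀ y, x ^ p * y = y * x ^ p)
    (hord : x ^ p ^ e = 1) (he : 1 ≤ e) : x ^ p ∈ M := by
  by_contra hc
  have hlt : M < M ⊔ Subgroup.zpowers (x ^ p) := by
    refine lt_of_le_of_ne le_sup_left (fun h => hc ?_)
    have : x ^ p ∈ M ⊔ Subgroup.zpowers (x ^ p) :=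
      (le_sup_right : Subgroup.zpowers (x ^ p) ≤ _) (Subgroup.mem_zpowers _)
    rwa [← h] at this
  have htop := hM.2 _ hlt
  have hxmem : x ∈ M ⊔ Subgroup.zpowers (x ^ p) := by rw [htop]; trivial
  obtain ⟨m, hm, k, hk⟩ := mem_sup_zpowers_central hx_central hxmem
  have hxk : (x ^ p) ^ k = x ^ ((p : ℤ) * k) := by
    rw [← zpow_natCast x p, ← zpow_mul]
  have h0 : m = x * ((x ^ p) ^ k)⁻¹ := eq_mul_inv_of_mul_eq hk.symm
  have hm' : x ^ (1 - (p : ℤ) * k) = m := by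
    rw [h0, hxk, sub_eq_add_neg, zpow_add, zpow_neg, zpow_one]
  have hco : IsCoprime (1 - (p : ℤ) * k) ((p : ℤ) ^ e) :=
    IsCoprime.pow_right (⟨1, k, by ring⟩ : IsCoprime (1 - (p : ℤ) * k) (p : ℤ))
  obtain ⟨u, v, huv⟩ := hco
  have hexp : (1 - (p : ℤ) * k) * u + (p : ℤ) ^ e * v = 1 := by linear_combination huv
  have hord' : x ^ ((p : ℤ) ^ e) = 1 := by
    rw [show ((p : ℤ) ^ e) = ((p ^ e : ℕ) : ℤ) by push_cast; ring, zpow_natCast, hord]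
  have hxM : x ∈ M := by
    have hxeq : x = (x ^ (1 - (p : ℤ) * k)) ^ u * (x ^ ((p : ℤ) ^ e)) ^ v := by
      rw [← zpow_mul, ← zpow_mul, ← zpow_add, hexp, zpow_one]
    rw [hxeq, hord', one_zpow, mul_one]
    refine M.zpow_mem ?_ u
    rw [hm']
    exact hm
  exact hc (M.pow_mem hxM p)

end coatoms

end Stmt8Aux

theorem stmt8 (p t s : ℕ) (hp : p.Prime) (hodd : Odd p) (hs : 1 ≤ s) (hts : s ≤ t) :
    frattini (Hgrp p t s) = Subgroup.closure {aa p t s ^ p, bb p t s ^ p, cc p t s} ∧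
    frattini (Hgrp p t s) ≤ Subgroup.center (Hgrp p t s) := by
  have ht : 1 ≤ t := hs.trans hts
  have hfr_le : frattini (Hgrp p t s) ≤ Stmt8Aux.Nsub p t s :=
    Stmt8Aux.frattini_le_Nsub p t s hp hs hts
  have hle2 : Stmt8Aux.Nsub p t s ≤ frattini (Hgrp p t s) := by
    unfold frattini Order.radical
    refine le_iInf₂ fun M hM => ?_
    rw [Stmt8Aux.Nsub, Subgroup.closure_le]
    rintro g (rfl | rfl | rfl)
    · exact Stmt8Aux.gen_pow_mem_coatom p t s hM (e := t) (Stmt8Aux.ap_central p t s)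
        (Stmt8Aux.rel_a p t s) ht
    · exact Stmt8Aux.gen_pow_mem_coatom p t s hM (e := s) (Stmt8Aux.bp_central p t s)
        (Stmt8Aux.rel_b p t s) hs
    · exact Stmt8Aux.cc_mem_coatom p t s hM
  refine ⟨le_antisymm hfr_le hle2, ?_⟩
  exact hfr_le.trans (Stmt8Aux.Nsub_le_center p t s)
end

section
/- In H = H_{p,t,s} with t > s and k² - k + 1 ≡ 0 (mod p^{t-s}), we have (a⁻¹ (a⁻¹ b a^k)^(-k))^(p^s) = (a^(p^s))^(k² - k + 1)·(-1) = 1; that is, the element a⁻¹(a⁻¹ b a^k)^(-k) has order dividing p^s. -/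
section Aux

variable {G : Type*} [Group G]

private lemma pull {z x : G} (h : Commute z x) (y : G) : x * (z * y) = z * (x * y) := by
  rw [← mul_assoc, ← h.eq, mul_assoc]

private lemma aux_zpow_mul {a b c : G} (hab : a * b = c * (b * a)) (hca : Commute c a)
    (hcb : Commute c b) : ∀ j : ℤ, a ^ j * b = c ^ j * (b * a ^ j) := by
  have hinv : a⁻¹ * b = c⁻¹ * (b * a⁻¹) := by
    have h1 : b * a = c⁻¹ * (a * b) := by rw [hab]; group
    calc a⁻¹ * b = a⁻¹ * ((b * a) * a⁻¹) := by group
      _ = a⁻¹ * ((c⁻¹ * (a * b)) * a⁻¹) := by rw [h1]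
      _ = a⁻¹ * (c⁻¹ * ((a * b) * a⁻¹)) := by group
      _ = c⁻¹ * (a⁻¹ * ((a * b) * a⁻¹)) := pull (hca.inv_left.inv_right) _
      _ = c⁻¹ * (b * a⁻¹) := by group
  intro j
  induction j using Int.induction_on with
  | zero => simp
  | succ n ih =>
      calc a ^ ((n : ℤ) + 1) * b = a ^ (n : ℤ) * (a * b) := by group
        _ = a ^ (n : ℤ) * (c * (b * a)) := by rw [hab]
        _ = c * (a ^ (n : ℤ) * (b * a)) := pull (hca.zpow_right (n : ℤ)) _
        _ = c * ((a ^ (n : ℤ) * b) * a) := by group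
        _ = c * ((c ^ (n : ℤ) * (b * a ^ (n : ℤ))) * a) := by rw [ih]
        _ = c ^ ((n : ℤ) + 1) * (b * a ^ ((n : ℤ) + 1)) := by group
  | pred n ih =>
      calc a ^ (-(n : ℤ) - 1) * b = a ^ (-(n : ℤ)) * (a⁻¹ * b) := by group
        _ = a ^ (-(n : ℤ)) * (c⁻¹ * (b * a⁻¹)) := by rw [hinv]
        _ = c⁻¹ * (a ^ (-(n : ℤ)) * (b * a⁻¹)) :=
            pull ((hca.inv_left).zpow_right (-(n : ℤ))) _
        _ = c⁻¹ * ((a ^ (-(n : ℤ)) * b) * a⁻¹) := by group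
        _ = c⁻¹ * ((c ^ (-(n : ℤ)) * (b * a ^ (-(n : ℤ)))) * a⁻¹) := by rw [ih]
        _ = c ^ (-(n : ℤ) - 1) * (b * a ^ (-(n : ℤ) - 1)) := by group

private lemma aux_zpow_zpow {a b c : G} (hab : a * b = c * (b * a)) (hca : Commute c a)
    (hcb : Commute c b) : ∀ i j : ℤ, a ^ j * b ^ i = c ^ (i * j) * (b ^ i * a ^ j) := by
  have L := aux_zpow_mul hab hca hcb
  have Linv : ∀ j : ℤ, a ^ j * b⁻¹ = c ^ (-j) * (b⁻¹ * a ^ j) := by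
    intro j
    have hswap : b * a ^ j = c ^ (-j) * (a ^ j * b) := by rw [L j]; group
    calc a ^ j * b⁻¹ = b⁻¹ * ((b * a ^ j) * b⁻¹) := by group
      _ = b⁻¹ * ((c ^ (-j) * (a ^ j * b)) * b⁻¹) := by rw [hswap]
      _ = b⁻¹ * (c ^ (-j) * ((a ^ j * b) * b⁻¹)) := by group
      _ = c ^ (-j) * (b⁻¹ * ((a ^ j * b) * b⁻¹)) :=
          pull ((hcb.zpow_left (-j)).inv_right) _
      _ = c ^ (-j) * (b⁻¹ * a ^ j) := by group
  intro i
  induction i using Int.induction_on with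
  | zero => simp
  | succ n ih =>
      intro j
      calc a ^ j * b ^ ((n : ℤ) + 1) = (a ^ j * b ^ (n : ℤ)) * b := by group
        _ = (c ^ ((n : ℤ) * j) * (b ^ (n : ℤ) * a ^ j)) * b := by rw [ih j]
        _ = c ^ ((n : ℤ) * j) * (b ^ (n : ℤ) * (a ^ j * b)) := by group
        _ = c ^ ((n : ℤ) * j) * (b ^ (n : ℤ) * (c ^ j * (b * a ^ j))) := by rw [L j]
        _ = c ^ ((n : ℤ) * j) * (c ^ j * (b ^ (n : ℤ) * (b * a ^ j))) := by
            rw [pull (hcb.zpow_zpow j (n : ℤ)) _]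
        _ = c ^ ((n : ℤ) * j + j) * (b ^ ((n : ℤ) + 1) * a ^ j) := by group
        _ = c ^ (((n : ℤ) + 1) * j) * (b ^ ((n : ℤ) + 1) * a ^ j) := by
            rw [show ((n : ℤ) + 1) * j = (n : ℤ) * j + j from by ring]
  | pred n ih =>
      intro j
      calc a ^ j * b ^ (-(n : ℤ) - 1) = (a ^ j * b ^ (-(n : ℤ))) * b⁻¹ := by group
        _ = (c ^ (-(n : ℤ) * j) * (b ^ (-(n : ℤ)) * a ^ j)) * b⁻¹ := by rw [ih j]
        _ = c ^ (-(n : ℤ) * j) * (b ^ (-(n : ℤ)) * (a ^ j * b⁻¹)) := by group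
        _ = c ^ (-(n : ℤ) * j) * (b ^ (-(n : ℤ)) * (c ^ (-j) * (b⁻¹ * a ^ j))) := by
            rw [Linv j]
        _ = c ^ (-(n : ℤ) * j) * (c ^ (-j) * (b ^ (-(n : ℤ)) * (b⁻¹ * a ^ j))) := by
            rw [pull (hcb.zpow_zpow (-j) (-(n : ℤ))) _]
        _ = c ^ (-(n : ℤ) * j + -j) * (b ^ (-(n : ℤ) - 1) * a ^ j) := by group
        _ = c ^ ((-(n : ℤ) - 1) * j) * (b ^ (-(n : ℤ) - 1) * a ^ j) := by
            rw [show (-(n : ℤ) - 1) * j = -(n : ℤ) * j + -j from by ring]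

private lemma aux_core {a b c : G} (hab : a * b = c * (b * a)) (hca : Commute c a)
    (hcb : Commute c b) (z : ℤ) :
    ∃ e : ℤ, 2 * e = z * (z - 1) ∧ (b * a) ^ z = c ^ e * (b ^ z * a ^ z) := by
  have L := aux_zpow_mul hab hca hcb
  have L2 := aux_zpow_zpow hab hca hcb
  have natcase : ∀ n : ℕ, ∃ e : ℤ, 2 * e = (n : ℤ) * ((n : ℤ) - 1) ∧
      (b * a) ^ (n : ℤ) = c ^ e * (b ^ (n : ℤ) * a ^ (n : ℤ)) := by
    intro n
    induction n with
    | zero => exact ⟨0, by norm_num, by simp⟩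
    | succ n ih =>
        obtain ⟨e, he, heq⟩ := ih
        refine ⟨e + n, by push_cast; linarith, ?_⟩
        calc (b * a) ^ (((n + 1 : ℕ)) : ℤ) = (b * a) ^ (n : ℤ) * (b * a) := by
              rw [show ((n + 1 : ℕ) : ℤ) = (n : ℤ) + 1 from by push_cast; ring, zpow_add_one]
          _ = (c ^ e * (b ^ (n : ℤ) * a ^ (n : ℤ))) * (b * a) := by rw [heq]
          _ = c ^ e * (b ^ (n : ℤ) * ((a ^ (n : ℤ) * b) * a)) := by group
          _ = c ^ e * (b ^ (n : ℤ) * ((c ^ (n : ℤ) * (b * a ^ (n : ℤ))) * a)) := by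
              rw [L (n : ℤ)]
          _ = c ^ e * (b ^ (n : ℤ) * (c ^ (n : ℤ) * ((b * a ^ (n : ℤ)) * a))) := by group
          _ = c ^ e * (c ^ (n : ℤ) * (b ^ (n : ℤ) * ((b * a ^ (n : ℤ)) * a))) := by
              rw [pull (hcb.zpow_zpow (n : ℤ) (n : ℤ)) _]
          _ = c ^ (e + (n : ℤ)) * (b ^ (((n + 1 : ℕ)) : ℤ) * a ^ (((n + 1 : ℕ)) : ℤ)) := by
              push_cast; group
  rcases le_or_gt 0 z with hz | hz
  · obtain ⟨n, rfl⟩ := Int.eq_ofNat_of_zero_le hz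
    exact natcase n
  · obtain ⟨n, rfl⟩ : ∃ n : ℕ, z = -(n : ℤ) := ⟨z.natAbs, by omega⟩
    obtain ⟨e, he, heq⟩ := natcase n
    refine ⟨-e + n * n, by push_cast at he ⊢; nlinarith, ?_⟩
    have hcw : Commute (c ^ (-e)) (b ^ (-(n : ℤ)) * a ^ (-(n : ℤ))) :=
      (hcb.zpow_zpow (-e) (-(n : ℤ))).mul_right (hca.zpow_zpow (-e) (-(n : ℤ)))
    calc (b * a) ^ (-(n : ℤ)) = ((b * a) ^ (n : ℤ))⁻¹ := by rw [zpow_neg]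
      _ = (c ^ e * (b ^ (n : ℤ) * a ^ (n : ℤ)))⁻¹ := by rw [heq]
      _ = (a ^ (-(n : ℤ)) * b ^ (-(n : ℤ))) * c ^ (-e) := by group
      _ = (c ^ ((-(n : ℤ)) * (-(n : ℤ))) * (b ^ (-(n : ℤ)) * a ^ (-(n : ℤ)))) * c ^ (-e) := by
          rw [L2 (-(n : ℤ)) (-(n : ℤ))]
      _ = c ^ ((n : ℤ) * (n : ℤ)) * ((b ^ (-(n : ℤ)) * a ^ (-(n : ℤ))) * c ^ (-e)) := by
          rw [show (-(n : ℤ)) * (-(n : ℤ)) = (n : ℤ) * (n : ℤ) from by ring]; group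
      _ = c ^ ((n : ℤ) * (n : ℤ)) * (c ^ (-e) * (b ^ (-(n : ℤ)) * a ^ (-(n : ℤ)))) := by
          rw [hcw.eq]
      _ = c ^ (-e + (n : ℤ) * (n : ℤ)) * (b ^ (-(n : ℤ)) * a ^ (-(n : ℤ))) := by group

end Aux

section Key

variable {G : Type*} [Group G]

private lemma key (a b c : G) (p t s : ℕ) (hp : p.Prime) (hodd : Odd p)
    (hs : 1 ≤ s) (hts : s < t) (k : ℤ) (hk : (p : ℤ) ^ (t - s) ∣ k ^ 2 - k + 1)
    (ra : a ^ p ^ t = 1) (rb : b ^ p ^ s = 1) (rc : c ^ p = 1)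
    (hab : a * b = c * (b * a)) (hca : Commute c a) (hcb : Commute c b) :
    (a⁻¹ * (a⁻¹ * b * a ^ k) ^ (-k)) ^ p ^ s = (a ^ p ^ s) ^ (-(k ^ 2 - k + 1)) ∧
    (a⁻¹ * (a⁻¹ * b * a ^ k) ^ (-k)) ^ p ^ s = 1 := by
  have L := aux_zpow_mul hab hca hcb
  have L2 := aux_zpow_zpow hab hca hcb
  set J : ℤ := -(k ^ 2 - k + 1) with hJ
  set N : ℤ := ((p ^ s : ℕ) : ℤ) with hN
  -- c has order dividing p (as ℤ-power)
  have rcz : ∀ m : ℤ, (p : ℤ) ∣ m → c ^ m = 1 := by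
    intro m ⟨q, hq⟩
    rw [hq, zpow_mul, zpow_natCast, rc, one_zpow]
  have rbz : b ^ N = 1 := by rw [hN, zpow_natCast, rb]
  -- Step 1: normal form of the base element
  obtain ⟨e, he, heq⟩ := aux_core (L (k - 1)) (hca.zpow_zpow (k - 1) (k - 1))
    (hcb.zpow_left (k - 1)) (-k)
  have hu : a⁻¹ * b * a ^ k = c ^ (-1 : ℤ) * (b * a ^ (k - 1)) := by
    calc a⁻¹ * b * a ^ k = (a ^ (-1 : ℤ) * b) * a ^ k := by group
      _ = (c ^ (-1 : ℤ) * (b * a ^ (-1 : ℤ))) * a ^ k := by rw [L (-1)]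
      _ = c ^ (-1 : ℤ) * (b * a ^ (k - 1)) := by group
  have hx : a⁻¹ * (a⁻¹ * b * a ^ k) ^ (-k)
      = c ^ (k + ((k - 1) * e + k)) * (b ^ (-k) * a ^ J) := by
    have hcw : Commute (c ^ (-1 : ℤ)) (b * a ^ (k - 1)) :=
      (hcb.zpow_left _).mul_right ((hca.zpow_zpow _ _))
    rw [hu, hcw.mul_zpow]
    rw [heq]
    calc a⁻¹ * ((c ^ (-1 : ℤ)) ^ (-k) * ((c ^ (k - 1)) ^ e * (b ^ (-k) * (a ^ (k - 1)) ^ (-k))))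
        = a⁻¹ * (c ^ k * (c ^ ((k - 1) * e) * (b ^ (-k) * a ^ ((k - 1) * (-k))))) := by
          rw [← zpow_mul, ← zpow_mul, ← zpow_mul]
          rw [show (-1 : ℤ) * (-k) = k from by ring]
      _ = c ^ k * (a⁻¹ * (c ^ ((k - 1) * e) * (b ^ (-k) * a ^ ((k - 1) * (-k))))) := by
          rw [pull ((hca.zpow_left k).inv_right) _]
      _ = c ^ k * (c ^ ((k - 1) * e) * (a⁻¹ * (b ^ (-k) * a ^ ((k - 1) * (-k))))) := by
          rw [pull ((hca.zpow_left ((k - 1) * e)).inv_right) _]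
      _ = c ^ k * (c ^ ((k - 1) * e) * ((a ^ (-1 : ℤ) * b ^ (-k)) * a ^ ((k - 1) * (-k)))) := by
          group
      _ = c ^ k * (c ^ ((k - 1) * e) *
            ((c ^ ((-k) * (-1)) * (b ^ (-k) * a ^ (-1 : ℤ))) * a ^ ((k - 1) * (-k)))) := by
          rw [L2 (-k) (-1)]
      _ = c ^ k * (c ^ ((k - 1) * e) * (c ^ k * (b ^ (-k) * a ^ ((k - 1) * (-k) + -1)))) := by
          rw [show (-k : ℤ) * (-1) = k from by ring]; group
      _ = c ^ (k + ((k - 1) * e + k)) * (b ^ (-k) * a ^ J) := by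
          rw [show J = (k - 1) * (-k) + -1 from by rw [hJ]; ring]; group
  -- Step 2: raise to the p^s power
  obtain ⟨f, hf, heq2⟩ := aux_core (L2 (-k) J) (hca.zpow_zpow ((-k) * J) J)
    (hcb.zpow_zpow ((-k) * J) (-k)) N
  set E : ℤ := k + ((k - 1) * e + k) with hE
  have hxN : (a⁻¹ * (a⁻¹ * b * a ^ k) ^ (-k)) ^ p ^ s = (a ^ p ^ s) ^ J := by
    have hcw2 : Commute (c ^ E) (b ^ (-k) * a ^ J) :=
      (hcb.zpow_zpow _ _).mul_right (hca.zpow_zpow _ _)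
    have hpN : (p : ℤ) ∣ N := by
      rw [hN]
      exact_mod_cast Int.natCast_dvd_natCast.mpr (dvd_pow_self p (by omega))
    have hpf : (p : ℤ) ∣ f := by
      have h2f : (p : ℤ) ∣ 2 * f := hf ▸ Dvd.dvd.mul_right hpN (N - 1)
      have hpZ : Prime (p : ℤ) := Nat.prime_iff_prime_int.mp hp
      rcases (hpZ.dvd_mul.mp h2f) with h | h
      · exfalso
        have h2 : p ∣ 2 := by exact_mod_cast h
        have := (Nat.prime_dvd_prime_iff_eq hp Nat.prime_two).mp h2
        subst this
        simp [Nat.odd_iff] at hodd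
      · exact h
    calc (a⁻¹ * (a⁻¹ * b * a ^ k) ^ (-k)) ^ p ^ s
        = (a⁻¹ * (a⁻¹ * b * a ^ k) ^ (-k)) ^ N := by rw [hN, zpow_natCast]
      _ = (c ^ E * (b ^ (-k) * a ^ J)) ^ N := by rw [hx]
      _ = (c ^ E) ^ N * ((c ^ ((-k) * J)) ^ f * ((b ^ (-k)) ^ N * (a ^ J) ^ N)) := by
          rw [hcw2.mul_zpow, heq2]
      _ = c ^ (E * N) * (c ^ ((-k) * J * f) * (b ^ ((-k) * N) * a ^ (J * N))) := by
          rw [← zpow_mul, ← zpow_mul, ← zpow_mul, ← zpow_mul]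
      _ = a ^ (J * N) := by
          rw [rcz (E * N) (Dvd.dvd.mul_left hpN E),
            rcz ((-k) * J * f) (Dvd.dvd.mul_left hpf _),
            show (-k) * N = N * (-k) from by ring, zpow_mul, rbz, one_zpow]
          group
      _ = (a ^ p ^ s) ^ J := by
          rw [show J * N = N * J from by ring, zpow_mul, hN, zpow_natCast]
  refine ⟨hxN, ?_⟩
  rw [hxN]
  obtain ⟨d, hd⟩ := hk
  have raz : a ^ ((p : ℤ) ^ t) = 1 := by
    rw [show ((p : ℤ) ^ t) = ((p ^ t : ℕ) : ℤ) from by push_cast; ring, zpow_natCast, ra]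
  calc (a ^ p ^ s) ^ J = a ^ (N * J) := by rw [hN, ← zpow_natCast a (p ^ s), ← zpow_mul]
    _ = (a ^ ((p : ℤ) ^ t)) ^ (-d) := by
        rw [← zpow_mul]
        have hst : s + (t - s) = t := by omega
        rw [hJ, hd, hN]
        push_cast
        rw [show ((p : ℤ) ^ t) = (p : ℤ) ^ s * (p : ℤ) ^ (t - s) from by
          rw [← pow_add, hst]]
        ring
    _ = 1 := by rw [raz, one_zpow]

end Key

open scoped commutatorElement

private lemma Hrel_one {p t s : ℕ} {r : FreeGroup (Fin 3)} (hr : r ∈ HRels p t s) :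
    PresentedGroup.mk (HRels p t s) r = 1 :=
  (QuotientGroup.eq_one_iff r).mpr (Subgroup.subset_normalClosure hr)

theorem stmt16 (p t s : ℕ) (hp : p.Prime) (hodd : Odd p) (hs : 1 ≤ s) (hts : s < t)
    (k : ℤ) (hk : (p : ℤ) ^ (t - s) ∣ k ^ 2 - k + 1) :
    ((aa p t s)⁻¹ * ((aa p t s)⁻¹ * bb p t s * aa p t s ^ k) ^ (-k)) ^ (p ^ s) =
      (aa p t s ^ (p ^ s : ℕ)) ^ (-(k ^ 2 - k + 1)) ∧
    ((aa p t s)⁻¹ * ((aa p t s)⁻¹ * bb p t s * aa p t s ^ k) ^ (-k)) ^ (p ^ s) = 1 := by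
  set a := aa p t s
  set b := bb p t s
  set c := cc p t s
  have ha : a = PresentedGroup.mk (HRels p t s) (FreeGroup.of 0) := rfl
  have hb : b = PresentedGroup.mk (HRels p t s) (FreeGroup.of 1) := rfl
  have hc : c = PresentedGroup.mk (HRels p t s) (FreeGroup.of 2) := rfl
  have ra : a ^ p ^ t = 1 := by
    have := Hrel_one (p := p) (t := t) (s := s) (Set.mem_insert _ _)
    rwa [map_pow, ← ha] at this
  have rb : b ^ p ^ s = 1 := by
    have := Hrel_one (p := p) (t := t) (s := s)
      (Set.mem_insert_of_mem _ (Set.mem_insert _ _))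
    rwa [map_pow, ← hb] at this
  have rc : c ^ p = 1 := by
    have := Hrel_one (p := p) (t := t) (s := s)
      (Set.mem_insert_of_mem _ (Set.mem_insert_of_mem _ (Set.mem_insert _ _)))
    rwa [map_pow, ← hc] at this
  have hcomm : ⁅a, b⁆ = c := by
    have := Hrel_one (p := p) (t := t) (s := s)
      (Set.mem_insert_of_mem _ (Set.mem_insert_of_mem _
        (Set.mem_insert_of_mem _ (Set.mem_insert _ _))))
    rw [map_mul, map_inv, map_commutatorElement, ← ha, ← hb, ← hc] at this
    exact (mul_inv_eq_one.mp this)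
  have hca : Commute c a := by
    have := Hrel_one (p := p) (t := t) (s := s)
      (Set.mem_insert_of_mem _ (Set.mem_insert_of_mem _ (Set.mem_insert_of_mem _
        (Set.mem_insert_of_mem _ (Set.mem_insert _ _)))))
    rw [map_commutatorElement, ← ha, ← hc] at this
    exact commutatorElement_eq_one_iff_commute.mp this
  have hcb : Commute c b := by
    have := Hrel_one (p := p) (t := t) (s := s)
      (Set.mem_insert_of_mem _ (Set.mem_insert_of_mem _ (Set.mem_insert_of_mem _
        (Set.mem_insert_of_mem _ (Set.mem_insert_of_mem _ rfl)))))
    rw [map_commutatorElement, ← hb, ← hc] at this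
    exact commutatorElement_eq_one_iff_commute.mp this
  have hab : a * b = c * (b * a) := by
    rw [← hcomm, commutatorElement_def]
    group
  exact key a b c p t s hp hodd hs hts k hk ra rb rc hab hca hcb
end
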